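/- arXiv:2112.02645 — 4 statements merged into one kernel-verified Lean document; each statement's English description precedes it below -/
import Mathlib

section
/- Let D be a weighted oriented graph with underlying graph G and edge ideal I(D) in S = K[t_1,…,t_s]. Then I(D)² = I(D)^{(2)} if and only if the following two conditions hold: (i) every vertex of V⁺(D) is a sink, and (ii) G contains no triangle (G has no clique on 3 vertices). -/
open MvPolynomial Pointwise

/-- A weighted oriented graph `D` on vertices `t_1, …, t_s` (indexed by `Fin s`):
a set of directed edges with no loops such that for each unordered pair of vertices at
most one orientation occurs, together with a weight function `w : V(D) → ℕ₊` which
equals `1` on every source vertex (a vertex having only outgoing edges, i.e. no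
incoming edge). -/
structure WOGraph (s : ℕ) where
  E : Set (Fin s × Fin s)
  no_loops : ∀ i : Fin s, (i, i) ∉ E
  no_two_orientations : ∀ i j : Fin s, (i, j) ∈ E → (j, i) ∉ E
  w : Fin s → ℕ
  w_pos : ∀ i, 1 ≤ w i
  source_weight_one : ∀ i : Fin s, (∀ j, (j, i) ∉ E) → w i = 1

/-- A vertex of `D` is a sink if it has only incoming edges. -/
def WOGraph.IsSink {s : ℕ} (D : WOGraph s) (i : Fin s) : Prop := ∀ j, (i, j) ∉ D.E

/-- `V⁺(D)`: the set of vertices of weight greater than `1`. -/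
def WOGraph.Vplus {s : ℕ} (D : WOGraph s) : Set (Fin s) := { i | 1 < D.w i }

/-- The underlying simple graph `G` of `D`, with edges `{t_i, t_j}` for `(t_i,t_j) ∈ E(D)`. -/
def WOGraph.underlying {s : ℕ} (D : WOGraph s) : SimpleGraph (Fin s) :=
  SimpleGraph.fromRel (fun i j => (i, j) ∈ D.E)

/-- The edge ideal `I(D) = (t_i t_j^{w_j} : (t_i, t_j) ∈ E(D))` of `D`
in `S = K[t_1, …, t_s]`. -/
noncomputable def WOGraph.edgeIdeal {s : ℕ} (D : WOGraph s) (K : Type*) [Field K] :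
    Ideal (MvPolynomial (Fin s) K) :=
  Ideal.span { f | ∃ e ∈ D.E, f = X e.1 * X e.2 ^ D.w e.2 }

/-- The contraction `J S_p ∩ S` to `R` of the extension of an ideal `J` to the
localization of `R` at a prime ideal `p`. -/
noncomputable def contractAt {R : Type*} [CommRing R] (J p : Ideal R) (hp : p.IsPrime) :
    Ideal R :=
  letI := hp
  (J.map (algebraMap R (Localization.AtPrime p))).comap
    (algebraMap R (Localization.AtPrime p))

/-- The `n`-th symbolic power `I^{(n)} = ⋂_{i=1}^r (Iⁿ S_{p_i} ∩ S)`, the intersection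
being taken over the minimal primes `p_1, …, p_r` of `I`. -/
noncomputable def symbolicPower {R : Type*} [CommRing R] (I : Ideal R) (n : ℕ) : Ideal R :=
  ⨅ (p : Ideal R) (hp : p ∈ I.minimalPrimes), contractAt (I ^ n) p hp.1.1

namespace WOSP

variable {s : ℕ}

/-! ### Combinatorial layer -/

noncomputable def evec (D : WOGraph s) (e : Fin s × Fin s) : Fin s →₀ ℕ :=
  Finsupp.single e.1 1 + Finsupp.single e.2 (D.w e.2)

def Exp2 (D : WOGraph s) (μ : Fin s →₀ ℕ) : Prop :=
  ∃ e ∈ D.E, ∃ f ∈ D.E, evec D e + evec D f ≤ μ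

def SatCond (D : WOGraph s) (C : Finset (Fin s)) (μ : Fin s →₀ ℕ) : Prop :=
  ∃ e ∈ D.E, ∃ f ∈ D.E, ∀ x ∈ C, evec D e x + evec D f x ≤ μ x

def IsCover (D : WOGraph s) (C : Finset (Fin s)) : Prop :=
  ∀ e ∈ D.E, e.1 ∈ C ∨ e.2 ∈ C

def IsMinCover (D : WOGraph s) (C : Finset (Fin s)) : Prop :=
  IsCover D C ∧ ∀ C' ⊆ C, IsCover D C' → C' = C

lemma edge_fst_ne_snd {D : WOGraph s} {e : Fin s × Fin s} (he : e ∈ D.E) : e.1 ≠ e.2 := by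
  intro h
  have h2 : (e.1, e.2) ∈ D.E := he
  rw [← h] at h2
  exact D.no_loops e.1 h2

lemma evec_apply (D : WOGraph s) (e : Fin s × Fin s) (x : Fin s) :
    evec D e x = (if e.1 = x then 1 else 0) + (if e.2 = x then D.w e.2 else 0) := by
  simp [evec, Finsupp.single_apply]

lemma one_le_evec {D : WOGraph s} {e : Fin s × Fin s} {x : Fin s}
    (h : x = e.1 ∨ x = e.2) : 1 ≤ evec D e x := by
  have hw := D.w_pos e.2
  rcases h with rfl | rfl <;> rw [evec_apply] <;> split_ifs <;> omega

lemma evec_eq_zero {D : WOGraph s} {e : Fin s × Fin s} {x : Fin s}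
    (h1 : x ≠ e.1) (h2 : x ≠ e.2) : evec D e x = 0 := by
  rw [evec_apply, if_neg (fun h => h1 h.symm), if_neg (fun h => h2 h.symm)]

lemma evec_fst {D : WOGraph s} {e : Fin s × Fin s} (he : e ∈ D.E) : evec D e e.1 = 1 := by
  rw [evec_apply, if_pos rfl, if_neg (edge_fst_ne_snd he).symm]

lemma evec_snd {D : WOGraph s} {e : Fin s × Fin s} (he : e ∈ D.E) : evec D e e.2 = D.w e.2 := by
  rw [evec_apply, if_pos rfl, if_neg (edge_fst_ne_snd he), zero_add]


lemma exists_minCover_subset {D : WOGraph s} :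
    ∀ C : Finset (Fin s), IsCover D C → ∃ C' ⊆ C, IsMinCover D C' := by
  intro C
  induction C using Finset.strongInductionOn with
  | _ C ih =>
    intro h
    by_cases hmin : ∀ C' ⊆ C, IsCover D C' → C' = C
    · exact ⟨C, Finset.Subset.refl C, h, hmin⟩
    · push_neg at hmin
      obtain ⟨C', h1, h2, h3⟩ := hmin
      obtain ⟨C'', hsub, hminC⟩ := ih C' (Finset.ssubset_iff_subset_ne.mpr ⟨h1, h3⟩) h2
      exact ⟨C'', hsub.trans h1, hminC⟩

lemma minCover_edge {D : WOGraph s} {C : Finset (Fin s)} (hC : IsMinCover D C) {x : Fin s}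
    (hx : x ∈ C) : ∃ e ∈ D.E, (e.1 = x ∧ e.2 ∉ C) ∨ (e.2 = x ∧ e.1 ∉ C) := by
  by_contra h
  push_neg at h
  have hcov : IsCover D (C.erase x) := by
    intro e he
    have h2 := h e he
    rcases hC.1 e he with h3 | h3
    · by_cases hx1 : e.1 = x
      · have h4 : e.2 ∈ C := h2.1 hx1
        right
        exact Finset.mem_erase.mpr ⟨fun hh => edge_fst_ne_snd he (hx1.trans hh.symm), h4⟩
      · exact Or.inl (Finset.mem_erase.mpr ⟨hx1, h3⟩)
    · by_cases hx2 : e.2 = x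
      · have h4 : e.1 ∈ C := h2.2 hx2
        left
        exact Finset.mem_erase.mpr ⟨fun hh => edge_fst_ne_snd he (hh.trans hx2.symm), h4⟩
      · exact Or.inr (Finset.mem_erase.mpr ⟨hx2, h3⟩)
  have heq := hC.2 (C.erase x) (Finset.erase_subset x C) hcov
  rw [← heq] at hx
  exact Finset.notMem_erase x C hx

lemma pair_pattern {D : WOGraph s} {g : Fin s × Fin s} (hg : g ∈ D.E) {u v : Fin s}
    (huv : u ≠ v) (hu : u = g.1 ∨ u = g.2) (hv : v = g.1 ∨ v = g.2) :
    g = (u, v) ∨ g = (v, u) := by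
  rcases hu with hu | hu <;> rcases hv with hv | hv
  · exact absurd (hu.trans hv.symm) huv
  · exact Or.inl (Prod.ext hu.symm hv.symm)
  · exact Or.inr (Prod.ext hv.symm hu.symm)
  · exact absurd (hu.trans hv.symm) huv

lemma eq_of_shared {D : WOGraph s} {e f : Fin s × Fin s} (he : e ∈ D.E) (hf : f ∈ D.E)
    {u v : Fin s} (huv : u ≠ v) (hu1 : u = e.1 ∨ u = e.2) (hv1 : v = e.1 ∨ v = e.2)
    (hu2 : u = f.1 ∨ u = f.2) (hv2 : v = f.1 ∨ v = f.2) : e = f := by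
  rcases pair_pattern he huv hu1 hv1 with rfl | rfl <;>
    rcases pair_pattern hf huv hu2 hv2 with rfl | rfl
  · rfl
  · exact absurd hf (D.no_two_orientations u v he)
  · exact absurd hf (D.no_two_orientations v u he)
  · rfl

/-- build adjacency in underlying graph from a directed edge both endpoints of which we know -/
lemma adj_of_shared {D : WOGraph s} {e : Fin s × Fin s} (he : e ∈ D.E) {u v : Fin s}
    (hu : u = e.1 ∨ u = e.2) (hv : v = e.1 ∨ v = e.2) (huv : u ≠ v) :
    (SimpleGraph.fromRel (fun i j => (i, j) ∈ D.E)).Adj u v := by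
  rw [SimpleGraph.fromRel_adj]
  refine ⟨huv, ?_⟩
  rcases pair_pattern he huv hu hv with rfl | rfl
  · exact Or.inl he
  · exact Or.inr he

lemma edge_of_pair {D : WOGraph s} (h1 : ∀ i, 1 < D.w i → ∀ j, (i, j) ∉ D.E) {p q : Fin s}
    (hpq : (p, q) ∈ D.E ∨ (q, p) ∈ D.E) (hwp : D.w p = 1) :
    ∃ g ∈ D.E, ((g.1 = p ∧ g.2 = q) ∨ (g.1 = q ∧ g.2 = p)) ∧
      evec D g = Finsupp.single p 1 + Finsupp.single q (D.w q) := by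
  rcases hpq with h | h
  · exact ⟨(p, q), h, Or.inl ⟨rfl, rfl⟩, rfl⟩
  · refine ⟨(q, p), h, Or.inr ⟨rfl, rfl⟩, ?_⟩
    have hq1 : D.w q = 1 := by
      by_contra hq
      exact h1 q (lt_of_le_of_ne (D.w_pos q) (Ne.symm hq)) p h
    show Finsupp.single q 1 + Finsupp.single p (D.w p) = _
    rw [hwp, hq1, add_comm]

lemma lemB {D : WOGraph s} (h1 : ∀ i, 1 < D.w i → ∀ j, (i, j) ∉ D.E)
    (h2 : (SimpleGraph.fromRel (fun i j => (i, j) ∈ D.E)).CliqueFree 3)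
    {ν : Fin s →₀ ℕ} (H : ∀ C, IsMinCover D C → SatCond D C ν) : Exp2 D ν := by
  classical
  by_contra hno
  rw [Exp2] at hno
  push_neg at hno
  have hfail : ∀ e ∈ D.E, ∀ f ∈ D.E, ∃ x, ν x < evec D e x + evec D f x := by
    intro e he f hf
    have h3 := hno e he f hf
    rw [Finsupp.le_def] at h3
    push_neg at h3
    obtain ⟨x, hx⟩ := h3
    exact ⟨x, by simpa [Finsupp.add_apply] using hx⟩
  set ZH : Fin s → Prop := fun x => ν x = 0 ∨ ν x < D.w x with hZH
  -- endpoints where ZH holds give "strong failure" of any edge through them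
  have strong : ∀ x, ZH x → ∀ e ∈ D.E, (x = e.1 ∨ x = e.2) → ν x < evec D e x := by
    intro x hx e he hend
    by_cases h0 : ν x = 0
    · rw [h0]
      exact lt_of_lt_of_le Nat.zero_lt_one (one_le_evec hend)
    · have hlt : ν x < D.w x := hx.resolve_left h0
      have hw2 : 1 < D.w x := by
        have := D.w_pos x
        omega
      rcases hend with rfl | rfl
      · exact absurd he (h1 e.1 hw2 e.2)
      · rwa [evec_snd he]
  -- every edge not dominated by ν has an endpoint satisfying ZH
  have failend : ∀ e ∈ D.E, ¬evec D e ≤ ν → ZH e.1 ∨ ZH e.2 := by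
    intro e he hne
    rw [Finsupp.le_def] at hne
    push_neg at hne
    obtain ⟨x, hx⟩ := hne
    have hend : x = e.1 ∨ x = e.2 := by
      by_contra hcon
      push_neg at hcon
      rw [evec_eq_zero hcon.1 hcon.2] at hx
      omega
    rcases hend with rfl | rfl
    · rw [evec_fst he] at hx
      exact Or.inl (Or.inl (by omega))
    · rw [evec_snd he] at hx
      exact Or.inr (Or.inr hx)
  by_cases hOK : ∃ e ∈ D.E, evec D e ≤ ν
  · -- there is a ν-dominated edge: find the star center v
    obtain ⟨e₀, he₀, hok₀⟩ := hOK
    -- any common failure point of two dominated edges is a common endpoint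
    have hend0 : ∀ (g : Fin s × Fin s) (x : Fin s), 0 < evec D g x → x = g.1 ∨ x = g.2 := by
      intro g x hg
      by_contra hcon
      push_neg at hcon
      rw [evec_eq_zero hcon.1 hcon.2] at hg
      omega
    -- edges through a common point have equal evec values there
    have evec_const : ∀ x, ∀ g ∈ D.E, ∀ g' ∈ D.E, (x = g.1 ∨ x = g.2) → (x = g'.1 ∨ x = g'.2) →
        evec D g x = evec D g' x := by
      intro x g hg g' hg' hxg hxg'
      have val : ∀ h ∈ D.E, (x = h.1 ∨ h.1 ≠ x ∧ x = h.2) → True := fun _ _ _ => trivial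
      have val2 : ∀ h, h ∈ D.E → (x = h.1 ∨ x = h.2) → evec D h x = if x = h.1 then 1 else D.w x := by
        intro h hh hxh
        rcases hxh with rfl | rfl
        · rw [evec_fst hh, if_pos rfl]
        · rw [evec_snd hh, if_neg (fun hc => edge_fst_ne_snd hh hc.symm)]
      rw [val2 g hg hxg, val2 g' hg' hxg']
      by_cases hw : D.w x = 1
      · rw [hw]; simp
      · have hw2 : 1 < D.w x := by have := D.w_pos x; omega
        have hx1 : x ≠ g.1 := by rintro rfl; exact h1 g.1 hw2 g.2 hg
        have hx2 : x ≠ g'.1 := by rintro rfl; exact h1 g'.1 hw2 g'.2 hg'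
        rw [if_neg hx1, if_neg hx2]
    obtain ⟨v, hv_e₀, hstar, hνv⟩ :
        ∃ v, (v = e₀.1 ∨ v = e₀.2) ∧ (∀ g ∈ D.E, evec D g ≤ ν → (v = g.1 ∨ v = g.2)) ∧
          ν v < evec D e₀ v + evec D e₀ v := by
      by_cases hsingle : ∀ g ∈ D.E, evec D g ≤ ν → g = e₀
      · obtain ⟨x, hx⟩ := hfail e₀ he₀ e₀ he₀
        have hend : x = e₀.1 ∨ x = e₀.2 := by
          apply hend0 e₀ x
          by_contra hc
          push_neg at hc
          omega
        exact ⟨x, hend, fun g hg hok => (hsingle g hg hok) ▸ hend, hx⟩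
      · push_neg at hsingle
        obtain ⟨e₁, he₁, hok₁, hne01⟩ := hsingle
        obtain ⟨v, hv⟩ := hfail e₀ he₀ e₁ he₁
        have hv0 : v = e₀.1 ∨ v = e₀.2 := by
          apply hend0
          have := Finsupp.le_def.mp hok₁ v
          omega
        have hv1 : v = e₁.1 ∨ v = e₁.2 := by
          apply hend0
          have := Finsupp.le_def.mp hok₀ v
          omega
        refine ⟨v, hv0, ?_, ?_⟩
        · -- star property via triangle-freeness
          intro g hg hok
          by_contra hvg
          push_neg at hvg
          obtain ⟨p, hp⟩ := hfail g hg e₀ he₀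
          have hp1 : p = g.1 ∨ p = g.2 := by
            apply hend0
            have := Finsupp.le_def.mp hok₀ p
            omega
          have hp2 : p = e₀.1 ∨ p = e₀.2 := by
            apply hend0
            have := Finsupp.le_def.mp hok p
            omega
          obtain ⟨q, hq⟩ := hfail g hg e₁ he₁
          have hq1 : q = g.1 ∨ q = g.2 := by
            apply hend0
            have := Finsupp.le_def.mp hok₁ q
            omega
          have hq2 : q = e₁.1 ∨ q = e₁.2 := by
            apply hend0
            have := Finsupp.le_def.mp hok q
            omega
          have hpv : p ≠ v := by
            rintro rfl
            rcases hp1 with h | h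
            · exact hvg.1 h
            · exact hvg.2 h
          have hqv : q ≠ v := by
            rintro rfl
            rcases hq1 with h | h
            · exact hvg.1 h
            · exact hvg.2 h
          have hpq : p ≠ q := by
            rintro rfl
            exact hne01 (eq_of_shared he₁ he₀ (Ne.symm hpv) hv1 hq2 hv0 hp2)
          -- triangle v, p, q
          have adj1 : (SimpleGraph.fromRel (fun i j => (i, j) ∈ D.E)).Adj v p :=
            adj_of_shared he₀ hv0 hp2 (Ne.symm hpv)
          have adj2 : (SimpleGraph.fromRel (fun i j => (i, j) ∈ D.E)).Adj v q :=
            adj_of_shared he₁ hv1 hq2 (Ne.symm hqv)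
          have adj3 : (SimpleGraph.fromRel (fun i j => (i, j) ∈ D.E)).Adj p q :=
            adj_of_shared hg hp1 hq1 hpq
          exact h2 {v, p, q} (SimpleGraph.is3Clique_triple_iff.mpr ⟨adj1, adj2, adj3⟩)
        · -- ν v < 2 ⬝ evec e₀ v
          have := evec_const v e₁ he₁ e₀ he₀ hv1 hv0
          omega
    -- now build the cover
    set C₀ : Finset (Fin s) := Finset.univ.filter (fun x => ZH x ∨ x = v) with hC₀
    have hcov : IsCover D C₀ := by
      intro e he
      by_cases hok : evec D e ≤ ν
      · rcases hstar e he hok with h | h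
        · exact Or.inl (by simp [hC₀, ← h])
        · exact Or.inr (by simp [hC₀, ← h])
      · rcases failend e he hok with h | h
        · exact Or.inl (by simp [hC₀, h])
        · exact Or.inr (by simp [hC₀, h])
    obtain ⟨C, hsub, hC⟩ := exists_minCover_subset C₀ hcov
    obtain ⟨e, he, f, hf, hcond⟩ := H C hC
    have branch : ∀ g ∈ D.E, (g.1 ∈ C ∨ g.2 ∈ C) →
        (∃ x ∈ C, ν x < evec D g x) ∨ ((v = g.1 ∨ v = g.2) ∧ v ∈ C) := by
      intro g hg hcovg
      rcases hcovg with hy | hy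
      · by_cases hzh : ZH g.1
        · exact Or.inl ⟨g.1, hy, strong g.1 hzh g hg (Or.inl rfl)⟩
        · have h4 : g.1 = v := by
            have h5 := hsub hy
            simp [hC₀] at h5
            tauto
          exact Or.inr ⟨Or.inl h4.symm, h4 ▸ hy⟩
      · by_cases hzh : ZH g.2
        · exact Or.inl ⟨g.2, hy, strong g.2 hzh g hg (Or.inr rfl)⟩
        · have h4 : g.2 = v := by
            have h5 := hsub hy
            simp [hC₀] at h5
            tauto
          exact Or.inr ⟨Or.inr h4.symm, h4 ▸ hy⟩
    rcases branch e he (hC.1 e he) with ⟨x, hx, hlt⟩ | ⟨hve, hvC⟩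
    · have := hcond x hx
      omega
    rcases branch f hf (hC.1 f hf) with ⟨x, hx, hlt⟩ | ⟨hvf, -⟩
    · have := hcond x hx
      omega
    · have h6 := hcond v hvC
      have h7 : evec D e v = evec D e₀ v := evec_const v e he e₀ he₀ hve hv_e₀
      have h8 : evec D f v = evec D e₀ v := evec_const v f hf e₀ he₀ hvf hv_e₀
      omega
  · -- no dominated edge at all
    push_neg at hOK
    set C₀ : Finset (Fin s) := Finset.univ.filter (fun x => ZH x) with hC₀
    have hcov : IsCover D C₀ := by
      intro e he
      rcases failend e he (hOK e he) with h | h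
      · exact Or.inl (by simp [hC₀, h])
      · exact Or.inr (by simp [hC₀, h])
    obtain ⟨C, hsub, hC⟩ := exists_minCover_subset C₀ hcov
    obtain ⟨e, he, f, hf, hcond⟩ := H C hC
    rcases hC.1 e he with hy | hy
    · have hzh : ZH e.1 := by have h5 := hsub hy; simpa [hC₀] using h5
      have := strong e.1 hzh e he (Or.inl rfl)
      have := hcond e.1 hy
      omega
    · have hzh : ZH e.2 := by have h5 := hsub hy; simpa [hC₀] using h5
      have := strong e.2 hzh e he (Or.inr rfl)
      have := hcond e.2 hy
      omega

lemma evec_fst' {D : WOGraph s} {p q : Fin s} (h : (p, q) ∈ D.E) : evec D (p, q) p = 1 :=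
  evec_fst h

lemma evec_snd' {D : WOGraph s} {p q : Fin s} (h : (p, q) ∈ D.E) : evec D (p, q) q = D.w q :=
  evec_snd h

lemma lemCa {D : WOGraph s} {a b c : Fin s} (hab : (a, b) ∈ D.E) (hbc : (b, c) ∈ D.E)
    (hw : 2 ≤ D.w b) : ∃ ν, ¬Exp2 D ν ∧ ∀ C, IsMinCover D C → SatCond D C ν := by
  classical
  have hab' : a ≠ b := edge_fst_ne_snd hab
  have hbc' : b ≠ c := edge_fst_ne_snd hbc
  have hac : a ≠ c := by rintro rfl; exact D.no_two_orientations a b hab hbc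
  set ν : Fin s →₀ ℕ :=
    Finsupp.single a 1 + Finsupp.single b (D.w b) + Finsupp.single c (D.w c) with hν
  have hνa : ν a = 1 := by
    simp [hν, Finsupp.single_apply, Ne.symm hab', Ne.symm hac]
  have hνb : ν b = D.w b := by
    simp [hν, Finsupp.single_apply, hab', Ne.symm hbc']
  have hνc : ν c = D.w c := by
    simp [hν, Finsupp.single_apply, hac, hbc']
  have hν0 : ∀ x, x ≠ a → x ≠ b → x ≠ c → ν x = 0 := by
    intro x h1 h2 h3
    simp [hν, Finsupp.single_apply, Ne.symm h1, Ne.symm h2, Ne.symm h3]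
  refine ⟨ν, ?_, ?_⟩
  · rintro ⟨e, he, f, hf, hle⟩
    rw [Finsupp.le_def] at hle
    have hle' : ∀ g, g = e ∨ g = f → ∀ x, evec D g x ≤ ν x := by
      rintro g (rfl | rfl) x <;> have := hle x <;> rw [Finsupp.add_apply] at this <;> omega
    have hclass : ∀ g, g = e ∨ g = f → g = (a, b) ∨ g = (b, c) ∨ g = (a, c) ∨ g = (c, a) := by
      rintro g hgef
      have hg : g ∈ D.E := by rcases hgef with rfl | rfl; exacts [he, hf]
      have hgle := hle' g hgef
      have hend : ∀ x, (x = g.1 ∨ x = g.2) → (x = a ∨ x = b ∨ x = c) := by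
        intro x hx
        by_contra hcon
        push_neg at hcon
        have h5 := hgle x
        rw [hν0 x hcon.1 hcon.2.1 hcon.2.2] at h5
        have h6 := one_le_evec (D := D) hx
        omega
      have h1 := hend g.1 (Or.inl rfl)
      have h2 := hend g.2 (Or.inr rfl)
      have hne := edge_fst_ne_snd hg
      rcases h1 with h1 | h1 | h1 <;> rcases h2 with h2 | h2 | h2
      · exact absurd (h1.trans h2.symm) hne
      · exact Or.inl (Prod.ext h1 h2)
      · exact Or.inr (Or.inr (Or.inl (Prod.ext h1 h2)))
      · exact absurd (by rw [show g = (b, a) from Prod.ext h1 h2] at hg; exact hg : (b, a) ∈ D.E) (D.no_two_orientations a b hab)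
      · exact absurd (h1.trans h2.symm) hne
      · exact Or.inr (Or.inl (Prod.ext h1 h2))
      · exact Or.inr (Or.inr (Or.inr (Prod.ext h1 h2)))
      · exact absurd (by rw [show g = (c, b) from Prod.ext h1 h2] at hg; exact hg : (c, b) ∈ D.E) (D.no_two_orientations b c hbc)
      · exact absurd (h1.trans h2.symm) hne
    have Ha := hle a
    have Hb := hle b
    have Hc := hle c
    rw [Finsupp.add_apply] at Ha Hb Hc
    have hwa := D.w_pos a
    have hwc := D.w_pos c
    rcases hclass e (Or.inl rfl) with rfl | rfl | rfl | rfl <;>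
        rcases hclass f (Or.inr rfl) with rfl | rfl | rfl | rfl <;>
      simp only [evec_apply, hνa, hνb, hνc] at Ha Hb Hc <;>
      simp [hab', hbc', hac, Ne.symm hab', Ne.symm hbc', Ne.symm hac] at Ha Hb Hc <;>
      omega
  · intro C hC
    by_cases hcC : c ∈ C
    · by_cases hbC : b ∈ C
      · obtain ⟨g, hg, hgcase⟩ := minCover_edge hC hbC
        rcases hgcase with ⟨hg1, hg2⟩ | ⟨hg1, hg2⟩
        · -- g = (b, t) with t ∉ C : use the pair (g, g), possible since 2 ≤ w b
          refine ⟨g, hg, g, hg, fun x hx => ?_⟩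
          by_cases hxb : x = b
          · subst hxb
            have hv : evec D g x = 1 := by rw [← hg1, evec_fst hg]
            rw [hv, hνb]
            omega
          · have hv : evec D g x = 0 :=
              evec_eq_zero (fun h => hxb (h.trans hg1)) (fun h => hg2 (by rw [← h]; exact hx))
            rw [hv]
            simp
        · -- g = (t, b) with t ∉ C : combine with a private edge at c
          obtain ⟨g', hg', hgcase'⟩ := minCover_edge hC hcC
          refine ⟨g, hg, g', hg', fun x hx => ?_⟩
          by_cases hxb : x = b
          · subst hxb
            have h3 : evec D g' x = 0 := by
              rcases hgcase' with ⟨hg1', hg2'⟩ | ⟨hg1', hg2'⟩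
              · exact evec_eq_zero (fun h => hbc' (h.trans hg1')) (fun h => hg2' (by rw [← h]; exact hx))
              · exact evec_eq_zero (fun h => hg2' (by rw [← h]; exact hx)) (fun h => hbc' (h.trans hg1'))
            have h4 : evec D g x ≤ D.w x := by
              rw [← hg1, evec_snd hg]
            rw [hνb, h3]
            omega
          · by_cases hxc : x = c
            · subst hxc
              have h3 : evec D g x = 0 :=
                evec_eq_zero (fun h => hg2 (by rw [← h]; exact hx)) (fun h => (Ne.symm hbc') (h.trans hg1))
              have h4 : evec D g' x ≤ D.w x := by
                rcases hgcase' with ⟨hg1', hg2'⟩ | ⟨hg1', hg2'⟩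
                · rw [← hg1', evec_fst hg']
                  exact D.w_pos _
                · rw [← hg1', evec_snd hg']
              rw [hνc, h3]
              omega
            · have h3 : evec D g x = 0 :=
                evec_eq_zero (fun h => hg2 (by rw [← h]; exact hx)) (fun h => hxb (h.trans hg1))
              have h4 : evec D g' x = 0 := by
                rcases hgcase' with ⟨hg1', hg2'⟩ | ⟨hg1', hg2'⟩
                · exact evec_eq_zero (fun h => hxc (h.trans hg1')) (fun h => hg2' (by rw [← h]; exact hx))
                · exact evec_eq_zero (fun h => hg2' (by rw [← h]; exact hx)) (fun h => hxc (h.trans hg1'))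
              rw [h3, h4]
              simp
      · -- c ∈ C, b ∉ C : then a ∈ C, use the pair ((a,b),(b,c))
        have haC : a ∈ C := by
          have h5 := hC.1 (a, b) hab
          exact h5.resolve_right hbC
        refine ⟨(a, b), hab, (b, c), hbc, fun x hx => ?_⟩
        by_cases hxa : x = a
        · subst hxa
          rw [evec_fst' hab, evec_eq_zero hab' hac, hνa]
        · by_cases hxb : x = b
          · exact absurd (by rw [← hxb]; exact hx : b ∈ C) hbC
          · by_cases hxc : x = c
            · subst hxc
              rw [evec_eq_zero (Ne.symm hac) (Ne.symm hbc'), evec_snd' hbc, hνc]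
              omega
            · rw [evec_eq_zero hxa hxb, evec_eq_zero hxb hxc]
              simp
    · -- c ∉ C : then b ∈ C, use the pair ((b,c),(b,c))
      have hbC : b ∈ C := by
        have h5 := hC.1 (b, c) hbc
        exact h5.resolve_right hcC
      refine ⟨(b, c), hbc, (b, c), hbc, fun x hx => ?_⟩
      by_cases hxb : x = b
      · subst hxb
        rw [evec_fst' hbc, hνb]
        omega
      · rw [evec_eq_zero (e := (b, c)) hxb (fun h => hcC ((show x = c from h) ▸ hx))]
        simp

lemma evec_le_of_private {D : WOGraph s} {C : Finset (Fin s)} {g : Fin s × Fin s} (hg : g ∈ D.E)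
    {p : Fin s} (hcase : (g.1 = p ∧ g.2 ∉ C) ∨ (g.2 = p ∧ g.1 ∉ C)) {t : Fin s} (ht : t ∈ C) :
    evec D g t ≤ if p = t then D.w p else 0 := by
  rcases hcase with ⟨u1, u2⟩ | ⟨u1, u2⟩
  · by_cases htp : t = p
    · subst htp
      have h0 : evec D g t = 1 := by rw [← u1]; exact evec_fst hg
      rw [h0, if_pos rfl]
      exact D.w_pos t
    · have h0 : evec D g t = 0 :=
        evec_eq_zero (fun h => htp (h.trans u1)) (fun h => u2 (by rw [← h]; exact ht))
      rw [h0]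
      exact Nat.zero_le _
  · by_cases htp : t = p
    · subst htp
      have h0 : evec D g t = D.w t := by rw [← u1]; exact evec_snd hg
      rw [h0, if_pos rfl]
    · have h0 : evec D g t = 0 :=
        evec_eq_zero (fun h => u2 (by rw [← h]; exact ht)) (fun h => htp (h.trans u1))
      rw [h0]
      exact Nat.zero_le _

lemma evec_pattern {D : WOGraph s} {g : Fin s × Fin s} {p q : Fin s}
    (hv : evec D g = Finsupp.single p 1 + Finsupp.single q (D.w q)) (t : Fin s) :
    evec D g t = (if p = t then 1 else 0) + (if q = t then D.w q else 0) := by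
  rw [hv]
  simp [Finsupp.single_apply]

lemma lemCb {D : WOGraph s} (h1 : ∀ i, 1 < D.w i → ∀ j, (i, j) ∉ D.E) {x y z : Fin s}
    (hxy : x ≠ y) (hxz : x ≠ z) (hyz : y ≠ z)
    (exy : (x, y) ∈ D.E ∨ (y, x) ∈ D.E) (exz : (x, z) ∈ D.E ∨ (z, x) ∈ D.E)
    (eyz : (y, z) ∈ D.E ∨ (z, y) ∈ D.E)
    (hwx : D.w x = 1) (hwy : D.w y = 1) :
    ∃ ν, ¬Exp2 D ν ∧ ∀ C, IsMinCover D C → SatCond D C ν := by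
  classical
  obtain ⟨gxy, hgxym, hgxyp, hgxyv⟩ := edge_of_pair h1 exy hwx
  obtain ⟨gxz, hgxzm, hgxzp, hgxzv⟩ := edge_of_pair h1 exz hwx
  obtain ⟨gyz, hgyzm, hgyzp, hgyzv⟩ := edge_of_pair h1 eyz hwy
  set ν : Fin s →₀ ℕ :=
    Finsupp.single x 1 + Finsupp.single y 1 + Finsupp.single z (D.w z) with hν
  have hνval : ∀ t, ν t =
      (if x = t then 1 else 0) + (if y = t then 1 else 0) + (if z = t then D.w z else 0) := by
    intro t
    simp [hν, Finsupp.single_apply]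
  have hν0 : ∀ t, t ≠ x → t ≠ y → t ≠ z → ν t = 0 := by
    intro t h1' h2' h3'
    rw [hνval t, if_neg (fun h => h1' h.symm), if_neg (fun h => h2' h.symm),
      if_neg (fun h => h3' h.symm)]
  have hwz := D.w_pos z
  refine ⟨ν, ?_, ?_⟩
  · rintro ⟨e, he, f, hf, hle⟩
    rw [Finsupp.le_def] at hle
    have hle' : ∀ g, g = e ∨ g = f → ∀ t, evec D g t ≤ ν t := by
      rintro g (rfl | rfl) t <;> have := hle t <;> rw [Finsupp.add_apply] at this <;> omega
    have pat1 : ∀ {g' : Fin s × Fin s} {p q : Fin s},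
        ((g'.1 = p ∧ g'.2 = q) ∨ (g'.1 = q ∧ g'.2 = p)) → p = g'.1 ∨ p = g'.2 := by
      rintro g' p q (⟨u1, u2⟩ | ⟨u1, u2⟩)
      exacts [Or.inl u1.symm, Or.inr u2.symm]
    have pat2 : ∀ {g' : Fin s × Fin s} {p q : Fin s},
        ((g'.1 = p ∧ g'.2 = q) ∨ (g'.1 = q ∧ g'.2 = p)) → q = g'.1 ∨ q = g'.2 := by
      rintro g' p q (⟨u1, u2⟩ | ⟨u1, u2⟩)
      exacts [Or.inr u2.symm, Or.inl u1.symm]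
    have hclass : ∀ g, g = e ∨ g = f → g = gxy ∨ g = gxz ∨ g = gyz := by
      rintro g hgef
      have hg : g ∈ D.E := by rcases hgef with rfl | rfl; exacts [he, hf]
      have hgle := hle' g hgef
      have hend : ∀ t, (t = g.1 ∨ t = g.2) → (t = x ∨ t = y ∨ t = z) := by
        intro t htg
        by_contra hcon
        push_neg at hcon
        have h5 := hgle t
        rw [hν0 t hcon.1 hcon.2.1 hcon.2.2] at h5
        have h6 := one_le_evec (D := D) htg
        omega
      have h1' := hend g.1 (Or.inl rfl)
      have h2' := hend g.2 (Or.inr rfl)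
      have hne := edge_fst_ne_snd hg
      rcases h1' with h1' | h1' | h1' <;> rcases h2' with h2' | h2' | h2'
      · exact absurd (h1'.trans h2'.symm) hne
      · exact Or.inl (eq_of_shared hg hgxym hxy (Or.inl h1'.symm) (Or.inr h2'.symm)
          (pat1 hgxyp) (pat2 hgxyp))
      · exact Or.inr (Or.inl (eq_of_shared hg hgxzm hxz (Or.inl h1'.symm) (Or.inr h2'.symm)
          (pat1 hgxzp) (pat2 hgxzp)))
      · exact Or.inl (eq_of_shared hg hgxym hxy (Or.inr h2'.symm) (Or.inl h1'.symm)
          (pat1 hgxyp) (pat2 hgxyp))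
      · exact absurd (h1'.trans h2'.symm) hne
      · exact Or.inr (Or.inr (eq_of_shared hg hgyzm hyz (Or.inl h1'.symm) (Or.inr h2'.symm)
          (pat1 hgyzp) (pat2 hgyzp)))
      · exact Or.inr (Or.inl (eq_of_shared hg hgxzm hxz (Or.inr h2'.symm) (Or.inl h1'.symm)
          (pat1 hgxzp) (pat2 hgxzp)))
      · exact Or.inr (Or.inr (eq_of_shared hg hgyzm hyz (Or.inr h2'.symm) (Or.inl h1'.symm)
          (pat1 hgyzp) (pat2 hgyzp)))
      · exact absurd (h1'.trans h2'.symm) hne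
    have Hx := hle x
    have Hy := hle y
    have Hz := hle z
    rw [Finsupp.add_apply] at Hx Hy Hz
    rcases hclass e (Or.inl rfl) with rfl | rfl | rfl <;>
        rcases hclass f (Or.inr rfl) with rfl | rfl | rfl <;>
      simp only [evec_pattern hgxyv, evec_pattern hgxzv, evec_pattern hgyzv,
        hνval] at Hx Hy Hz <;>
      simp [hxy, hxz, hyz, Ne.symm hxy, Ne.symm hxz, Ne.symm hyz, hwy] at Hx Hy Hz <;>
      omega
  · intro C hC
    have covof : ∀ {g : Fin s × Fin s} {p q : Fin s}, g ∈ D.E →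
        ((g.1 = p ∧ g.2 = q) ∨ (g.1 = q ∧ g.2 = p)) → p ∈ C ∨ q ∈ C := by
      rintro g p q hg (⟨u1, u2⟩ | ⟨u1, u2⟩) <;> rcases hC.1 g hg with h | h
      · exact Or.inl (u1 ▸ h)
      · exact Or.inr (u2 ▸ h)
      · exact Or.inr (u1 ▸ h)
      · exact Or.inl (u2 ▸ h)
    have covxy := covof hgxym hgxyp
    have covxz := covof hgxzm hgxzp
    have covyz := covof hgyzm hgyzp
    by_cases hzC : z ∈ C
    · by_cases hxC : x ∈ C
      · by_cases hyC : y ∈ C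
        · -- x, y, z ∈ C : private edge at z together with the x-y edge
          obtain ⟨g, hg, hgcase⟩ := minCover_edge hC hzC
          refine ⟨g, hg, gxy, hgxym, fun t ht => ?_⟩
          have A := evec_le_of_private hg hgcase ht
          rw [evec_pattern hgxyv t, hνval t]
          split_ifs at A ⊢ <;> omega
        · -- y ∉ C : use (gxy, gyz)
          refine ⟨gxy, hgxym, gyz, hgyzm, fun t ht => ?_⟩
          have hnyt : ¬(y = t) := fun h => hyC (h ▸ ht)
          rw [evec_pattern hgxyv t, evec_pattern hgyzv t, hνval t]
          simp only [if_neg hnyt]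
          split_ifs <;> omega
      · -- x ∉ C, hence y ∈ C : use (gxy, gxz)
        refine ⟨gxy, hgxym, gxz, hgxzm, fun t ht => ?_⟩
        have hnxt : ¬(x = t) := fun h => hxC (h ▸ ht)
        rw [evec_pattern hgxyv t, evec_pattern hgxzv t, hνval t]
        simp only [if_neg hnxt]
        split_ifs <;> omega
    · -- z ∉ C, hence x ∈ C and y ∈ C : use (gxz, gyz)
      refine ⟨gxz, hgxzm, gyz, hgyzm, fun t ht => ?_⟩
      have hnzt : ¬(z = t) := fun h => hzC (h ▸ ht)
      rw [evec_pattern hgxzv t, evec_pattern hgyzv t, hνval t]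
      simp only [if_neg hnzt]
      split_ifs <;> omega

/-! ### Monomial order machinery -/

open Finsupp in
noncomputable def Phi (C : Finset (Fin s)) (ν : Fin s →₀ ℕ) : Lex (ℕ × Lex (Fin s →₀ ℕ)) :=
  toLex (∑ i ∈ C, ν i, toLex ν)

lemma Phi_injective (C : Finset (Fin s)) : Function.Injective (Phi C) := by
  intro a b h
  have h2 := congrArg (fun p => (ofLex p).2) h
  simpa [Phi] using h2

lemma degsum_add (C : Finset (Fin s)) (a b : Fin s →₀ ℕ) :
    ∑ i ∈ C, (a + b) i = (∑ i ∈ C, a i) + ∑ i ∈ C, b i := by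
  rw [← Finset.sum_add_distrib]
  simp [Finsupp.add_apply]

lemma Phi_add_lt {C : Finset (Fin s)} {a b : Fin s →₀ ℕ} (h : Phi C a < Phi C b)
    (c : Fin s →₀ ℕ) : Phi C (a + c) < Phi C (b + c) := by
  rw [Phi, Phi, Prod.Lex.lt_iff] at h ⊢
  simp only [ofLex_toLex] at h ⊢
  rcases h with h | ⟨h1, h2⟩
  · left
    rw [degsum_add, degsum_add]
    omega
  · right
    constructor
    · rw [degsum_add, degsum_add, h1]
    · show toLex (a + c) < toLex (b + c)
      rw [toLex_add, toLex_add]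
      exact add_lt_add_left h2 _
  
lemma Phi_add_le {C : Finset (Fin s)} {a b : Fin s →₀ ℕ} (h : Phi C a ≤ Phi C b)
    (c : Fin s →₀ ℕ) : Phi C (a + c) ≤ Phi C (b + c) := by
  rcases h.lt_or_eq with h | h
  · exact (Phi_add_lt h c).le
  · rw [Phi_injective C h]

lemma Phi_min_unique {C : Finset (Fin s)} {a b c d : Fin s →₀ ℕ} (h : a + b = c + d)
    (ha : Phi C c ≤ Phi C a) (hb : Phi C d ≤ Phi C b) : c = a ∧ d = b := by
  rcases ha.lt_or_eq with hlt | heq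
  · exfalso
    have h1 : Phi C (c + d) < Phi C (a + d) := Phi_add_lt hlt d
    have h2 : Phi C (d + a) ≤ Phi C (b + a) := Phi_add_le hb a
    rw [add_comm d a, add_comm b a] at h2
    rw [← h] at h1
    exact absurd (h1.trans_le h2) (lt_irrefl _)
  · have hca : c = a := Phi_injective C heq
    subst hca
    refine ⟨rfl, ?_⟩
    have := add_left_cancel h.symm
    exact this.symm ▸ rfl

lemma Phi_min_degzero {C : Finset (Fin s)} {μ ν : Fin s →₀ ℕ}
    (hν0 : ∀ i ∈ C, ν i = 0) (hmin : Phi C μ ≤ Phi C ν) : ∀ i ∈ C, μ i = 0 := by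
  have hd : ∑ i ∈ C, ν i = 0 := Finset.sum_eq_zero hν0
  rw [Phi, Phi, Prod.Lex.le_iff] at hmin
  simp only [ofLex_toLex] at hmin
  have hd2 : ∑ i ∈ C, μ i = 0 := by
    rcases hmin with h | ⟨h1, _⟩ <;> omega
  intro i hi
  exact (Finset.sum_eq_zero_iff).mp hd2 i hi

/-! ### Polynomial layer -/

section Poly

variable (K : Type*) [Field K]

open MvPolynomial

lemma exists_phi_min (C : Finset (Fin s)) {p : MvPolynomial (Fin s) K} (hp : p ≠ 0) :
    ∃ μ ∈ p.support, ∀ τ ∈ p.support, Phi C μ ≤ Phi C τ :=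
  p.support.exists_min_image (Phi C)
    (Finset.nonempty_iff_ne_empty.mpr (fun h => hp (MvPolynomial.support_eq_empty.mp h)))

lemma min_mul_mem (C : Finset (Fin s)) {u f : MvPolynomial (Fin s) K} {μ ν : Fin s →₀ ℕ}
    (hμ : μ ∈ u.support) (hν : ν ∈ f.support)
    (hμm : ∀ τ ∈ u.support, Phi C μ ≤ Phi C τ) (hνm : ∀ τ ∈ f.support, Phi C ν ≤ Phi C τ) :
    μ + ν ∈ (u * f).support := by
  classical
  rw [mem_support_iff, coeff_mul]
  rw [Finset.sum_eq_single_of_mem (μ, ν) (Finset.HasAntidiagonal.mem_antidiagonal.mpr rfl)]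
  · exact mul_ne_zero (mem_support_iff.mp hμ) (mem_support_iff.mp hν)
  · rintro ⟨a, b⟩ hab hne
    rcases eq_or_ne (coeff a u) 0 with h | h
    · rw [h, zero_mul]
    rcases eq_or_ne (coeff b f) 0 with h' | h'
    · rw [h', mul_zero]
    exfalso
    have h6 := Phi_min_unique (C := C) (Finset.HasAntidiagonal.mem_antidiagonal.mp hab)
      (hμm a (mem_support_iff.mpr h)) (hνm b (mem_support_iff.mpr h'))
    exact hne (Prod.ext h6.1.symm h6.2.symm)

noncomputable def primeOf (C : Finset (Fin s)) : Ideal (MvPolynomial (Fin s) K) :=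
  Ideal.span (MvPolynomial.X '' (↑C : Set (Fin s)))

lemma mem_primeOf_iff {C : Finset (Fin s)} {f : MvPolynomial (Fin s) K} :
    f ∈ primeOf K C ↔ ∀ μ ∈ f.support, ∃ i ∈ C, μ i ≠ 0 := by
  rw [primeOf, mem_ideal_span_X_image]
  simp

lemma not_mem_primeOf_iff {C : Finset (Fin s)} {f : MvPolynomial (Fin s) K} :
    f ∉ primeOf K C ↔ ∃ μ ∈ f.support, ∀ i ∈ C, μ i = 0 := by
  rw [mem_primeOf_iff]
  push_neg
  rfl

lemma X_mem_primeOf_iff {C : Finset (Fin s)} {i : Fin s} :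
    (X i : MvPolynomial (Fin s) K) ∈ primeOf K C ↔ i ∈ C := by
  rw [mem_primeOf_iff]
  constructor
  · intro h
    obtain ⟨j, hj, hne⟩ := h (Finsupp.single i 1) (by
      rw [MvPolynomial.support_X]; exact Finset.mem_singleton_self _)
    rw [Finsupp.single_apply_ne_zero] at hne
    rwa [← hne.1]
  · intro h μ hμ
    rw [MvPolynomial.support_X, Finset.mem_singleton] at hμ
    subst hμ
    exact ⟨i, h, by simp⟩

lemma primeOf_isPrime (C : Finset (Fin s)) : (primeOf K C (s := s)).IsPrime := by
  rw [Ideal.isPrime_iff]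
  constructor
  · rw [Ne, Ideal.eq_top_iff_one, mem_primeOf_iff]
    intro h
    obtain ⟨i, _, hne⟩ := h 0 (by
      rw [mem_support_iff]
      simp [MvPolynomial.coeff_one])
    simp at hne
  · intro f g hfg
    by_contra hcon
    push_neg at hcon
    obtain ⟨hf, hg⟩ := hcon
    obtain ⟨μ₀, hμ₀, hμ₀0⟩ := (not_mem_primeOf_iff K).mp hf
    obtain ⟨ν₀, hν₀, hν₀0⟩ := (not_mem_primeOf_iff K).mp hg
    have hfne : f ≠ 0 := fun h => hf (h ▸ Ideal.zero_mem _)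
    have hgne : g ≠ 0 := fun h => hg (h ▸ Ideal.zero_mem _)
    obtain ⟨μ, hμ, hμm⟩ := exists_phi_min K C hfne
    obtain ⟨ν, hν, hνm⟩ := exists_phi_min K C hgne
    have hμz : ∀ i ∈ C, μ i = 0 := Phi_min_degzero hμ₀0 (hμm μ₀ hμ₀)
    have hνz : ∀ i ∈ C, ν i = 0 := Phi_min_degzero hν₀0 (hνm ν₀ hν₀)
    have hmem := min_mul_mem K C hμ hν hμm hνm
    obtain ⟨i, hi, hine⟩ := (mem_primeOf_iff K).mp hfg (μ + ν) hmem
    rw [Finsupp.add_apply, hμz i hi, hνz i hi] at hine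
    exact hine rfl

end Poly

def SatSet (D : WOGraph s) (C : Finset (Fin s)) : Set (Fin s →₀ ℕ) :=
  {μ | ∃ ρ : Fin s →₀ ℕ, (∀ i ∈ C, ρ i = 0) ∧ ∃ e ∈ D.E, ∃ f ∈ D.E, evec D e + evec D f ≤ ρ + μ}

lemma satSet_upward {D : WOGraph s} {C : Finset (Fin s)} {μ ν : Fin s →₀ ℕ}
    (h : μ ∈ SatSet D C) (hle : μ ≤ ν) : ν ∈ SatSet D C := by
  obtain ⟨ρ, hρ, e, he, f, hf, hle'⟩ := h
  exact ⟨ρ, hρ, e, he, f, hf, hle'.trans (add_le_add_right hle ρ)⟩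

lemma mem_satSet_iff {D : WOGraph s} {C : Finset (Fin s)} {μ : Fin s →₀ ℕ} :
    μ ∈ SatSet D C ↔ SatCond D C μ := by
  constructor
  · rintro ⟨ρ, hρ, e, he, f, hf, hle⟩
    refine ⟨e, he, f, hf, fun x hx => ?_⟩
    have h2 := Finsupp.le_def.mp hle x
    rw [Finsupp.add_apply, Finsupp.add_apply, hρ x hx] at h2
    omega
  · rintro ⟨e, he, f, hf, hcond⟩
    classical
    refine ⟨(evec D e + evec D f).filter (fun x => x ∉ C),
      fun i hi => Finsupp.filter_apply_neg _ _ (by simp [hi]), e, he, f, hf, ?_⟩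
    rw [Finsupp.le_def]
    intro i
    simp only [Finsupp.add_apply]
    by_cases hi : i ∈ C
    · rw [Finsupp.filter_apply_neg _ _ (by simp [hi])]
      have := hcond i hi
      omega
    · rw [Finsupp.filter_apply_pos _ _ (by simp [hi])]
      exact le_self_add

lemma exp2_of_gen {D : WOGraph s} {μ : Fin s →₀ ℕ} {e f : Fin s × Fin s} (he : e ∈ D.E)
    (hf : f ∈ D.E) (h : evec D e + evec D f ≤ μ) : Exp2 D μ := ⟨e, he, f, hf, h⟩

section Poly2

variable (K : Type*) [Field K]

open MvPolynomial

lemma monomial_evec (D : WOGraph s) (e : Fin s × Fin s) :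
    (monomial (evec D e) (1 : K)) = X e.1 * X e.2 ^ D.w e.2 := by
  rw [X_pow_eq_monomial, X, monomial_mul, one_mul, evec]

lemma edgeIdeal_eq_span (D : WOGraph s) :
    D.edgeIdeal K = Ideal.span ((fun ν => monomial ν (1 : K)) '' {ν | ∃ e ∈ D.E, ν = evec D e}) := by
  unfold WOGraph.edgeIdeal
  congr 1
  ext g
  simp only [Set.mem_setOf_eq, Set.mem_image]
  constructor
  · rintro ⟨e, he, rfl⟩
    exact ⟨evec D e, ⟨e, he, rfl⟩, monomial_evec K D e⟩
  · rintro ⟨ν, ⟨e, he, rfl⟩, rfl⟩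
    exact ⟨e, he, monomial_evec K D e⟩

lemma edgeIdeal_sq_span (D : WOGraph s) :
    D.edgeIdeal K ^ 2 = Ideal.span ((fun ν => monomial ν (1 : K)) ''
      {ν | ∃ e ∈ D.E, ∃ f ∈ D.E, ν = evec D e + evec D f}) := by
  rw [pow_two, edgeIdeal_eq_span, Ideal.span_mul_span']
  apply le_antisymm
  · rw [Ideal.span_le]
    rintro p hp
    rw [Set.mem_mul] at hp
    obtain ⟨p1, hp1, p2, hp2, rfl⟩ := hp
    obtain ⟨μ, ⟨e, he, rfl⟩, rfl⟩ := hp1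
    obtain ⟨τ, ⟨f, hf, rfl⟩, rfl⟩ := hp2
    rw [SetLike.mem_coe]
    apply Ideal.subset_span
    exact ⟨evec D e + evec D f, ⟨e, he, f, hf, rfl⟩, by simp [monomial_mul]⟩
  · rw [Ideal.span_le]
    rintro p ⟨ν, ⟨e, he, f, hf, rfl⟩, rfl⟩
    rw [SetLike.mem_coe]
    apply Ideal.subset_span
    exact ⟨monomial (evec D e) 1, ⟨evec D e, ⟨e, he, rfl⟩, rfl⟩,
      monomial (evec D f) 1, ⟨evec D f, ⟨f, hf, rfl⟩, rfl⟩, by simp [monomial_mul]⟩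

lemma mem_sq_iff (D : WOGraph s) {f : MvPolynomial (Fin s) K} :
    f ∈ D.edgeIdeal K ^ 2 ↔ ∀ μ ∈ f.support, Exp2 D μ := by
  rw [edgeIdeal_sq_span, mem_ideal_span_monomial_image]
  refine forall₂_congr fun μ hμ => ?_
  constructor
  · rintro ⟨σ, ⟨e, he, f', hf', rfl⟩, hle⟩
    exact ⟨e, he, f', hf', hle⟩
  · rintro ⟨e, he, f', hf', hle⟩
    exact ⟨evec D e + evec D f', ⟨e, he, f', hf', rfl⟩, hle⟩

noncomputable def satIdeal (D : WOGraph s) (C : Finset (Fin s)) :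
    Ideal (MvPolynomial (Fin s) K) :=
  Ideal.span ((fun ν => monomial ν (1 : K)) '' SatSet D C)

lemma mem_satIdeal_iff {D : WOGraph s} {C : Finset (Fin s)} {f : MvPolynomial (Fin s) K} :
    f ∈ satIdeal K D C ↔ ∀ μ ∈ f.support, μ ∈ SatSet D C := by
  rw [satIdeal, mem_ideal_span_monomial_image]
  exact forall₂_congr fun μ hμ =>
    ⟨fun ⟨σ, hσ, hle⟩ => satSet_upward hσ hle, fun h => ⟨μ, h, le_rfl⟩⟩

lemma monomial_mem_satIdeal {D : WOGraph s} {C : Finset (Fin s)} {ν : Fin s →₀ ℕ}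
    (hν : ν ∈ SatSet D C) (c : K) : monomial ν c ∈ satIdeal K D C := by
  rw [mem_satIdeal_iff]
  intro μ hμ
  by_cases hc : c = 0
  · subst hc
    rw [monomial_zero] at hμ
    simp at hμ
  · classical
    rw [support_monomial, if_neg hc, Finset.mem_singleton] at hμ
    rwa [hμ]

lemma sq_le_satIdeal (D : WOGraph s) (C : Finset (Fin s)) :
    D.edgeIdeal K ^ 2 ≤ satIdeal K D C := by
  intro f hf
  rw [mem_satIdeal_iff]
  intro μ hμ
  obtain ⟨e, he, f', hf', hle⟩ := (mem_sq_iff K D).mp hf μ hμ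
  exact ⟨0, fun i _ => rfl, e, he, f', hf', by rwa [zero_add]⟩

lemma sat_of_mul_mem {D : WOGraph s} {C : Finset (Fin s)} {u f : MvPolynomial (Fin s) K}
    (hu : u ∉ primeOf K C) (h : u * f ∈ satIdeal K D C) : f ∈ satIdeal K D C := by
  classical
  suffices H : ∀ n (f : MvPolynomial (Fin s) K), f.support.card ≤ n →
      u * f ∈ satIdeal K D C → f ∈ satIdeal K D C from H _ f le_rfl h
  intro n
  induction n with
  | zero =>
    intro f hf _
    have : f = 0 := MvPolynomial.support_eq_empty.mp (Finset.card_eq_zero.mp (Nat.le_zero.mp hf))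
    rw [this]
    exact Ideal.zero_mem _
  | succ n ih =>
    intro f hf hmem
    by_cases hf0 : f = 0
    · rw [hf0]; exact Ideal.zero_mem _
    have hu0 : u ≠ 0 := fun h => hu (h ▸ Ideal.zero_mem _)
    obtain ⟨μ₀, hμ₀, hμ₀m⟩ := exists_phi_min K C hf0
    obtain ⟨μu, hμu, hμum⟩ := exists_phi_min K C hu0
    obtain ⟨τ, hτ, hτ0⟩ := (not_mem_primeOf_iff K).mp hu
    have huz : ∀ i ∈ C, μu i = 0 := Phi_min_degzero hτ0 (hμum τ hτ)
    have hprod := min_mul_mem K C hμu hμ₀ hμum hμ₀m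
    have hsat : μu + μ₀ ∈ SatSet D C := (mem_satIdeal_iff K).mp hmem _ hprod
    have hμ₀sat : μ₀ ∈ SatSet D C := by
      obtain ⟨ρ, hρ, e, he, f', hf', hle⟩ := hsat
      refine ⟨ρ + μu, fun i hi => by rw [Finsupp.add_apply, hρ i hi, huz i hi], e, he, f', hf', ?_⟩
      rwa [add_assoc]
    set f1 : MvPolynomial (Fin s) K := f - monomial μ₀ (coeff μ₀ f) with hf1
    have hcoeff : ∀ τ', coeff τ' f1 = if τ' = μ₀ then 0 else coeff τ' f := by
      intro τ'
      rw [hf1, coeff_sub, coeff_monomial]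
      by_cases h1 : τ' = μ₀
      · rw [if_pos h1, if_pos h1.symm, h1, sub_self]
      · rw [if_neg h1, if_neg (fun h => h1 h.symm), sub_zero]
    have hsupp : f1.support = f.support.erase μ₀ := by
      ext τ'
      rw [mem_support_iff, Finset.mem_erase, mem_support_iff, hcoeff]
      split_ifs with h1
      · simp [h1]
      · simp [h1]
    have hmono : monomial μ₀ (coeff μ₀ f) ∈ satIdeal K D C := monomial_mem_satIdeal K hμ₀sat _
    have hmem1 : u * f1 ∈ satIdeal K D C := by
      rw [hf1, mul_sub]
      exact Ideal.sub_mem _ hmem (Ideal.mul_mem_left _ u hmono)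
    have hcard : f1.support.card ≤ n := by
      rw [hsupp]
      have := Finset.card_erase_of_mem hμ₀
      omega
    have hf1mem := ih f1 hcard hmem1
    have : f = f1 + monomial μ₀ (coeff μ₀ f) := by rw [hf1, sub_add_cancel]
    rw [this]
    exact Ideal.add_mem _ hf1mem hmono

lemma mem_contractAt_iff {R : Type*} [CommRing R] {J p : Ideal R} (hp : p.IsPrime) {f : R} :
    f ∈ contractAt J p hp ↔ ∃ u ∉ p, u * f ∈ J := by
  letI := hp
  constructor
  · intro h
    rw [contractAt, Ideal.mem_comap] at h
    obtain ⟨⟨j, u⟩, hju⟩ := (IsLocalization.mem_map_algebraMap_iff p.primeCompl _).mp h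
    rw [← map_mul] at hju
    obtain ⟨c, hc⟩ := (IsLocalization.eq_iff_exists p.primeCompl _).mp hju
    refine ⟨(c : R) * (u : R), (c * u : p.primeCompl).2, ?_⟩
    have : (c : R) * (f * u) = (c : R) * j := hc
    have h2 : ((c : R) * (u : R)) * f = (c : R) * (j : R) := by
      rw [← this]; ring
    rw [h2]
    exact Ideal.mul_mem_left _ _ j.2
  · rintro ⟨u, hu, huf⟩
    rw [contractAt, Ideal.mem_comap]
    have hunit : IsUnit (algebraMap R (Localization.AtPrime p) u) :=
      IsLocalization.map_units _ (⟨u, hu⟩ : p.primeCompl)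
    have h1 : algebraMap R (Localization.AtPrime p) (u * f) ∈
        Ideal.map (algebraMap R (Localization.AtPrime p)) J := Ideal.mem_map_of_mem _ huf
    have h3 := Ideal.mul_mem_left _ (↑hunit.unit⁻¹) h1
    rwa [map_mul, ← mul_assoc, IsUnit.val_inv_mul, one_mul] at h3

lemma contract_eq (D : WOGraph s) (C : Finset (Fin s)) (hp : (primeOf K C (s := s)).IsPrime) :
    contractAt (D.edgeIdeal K ^ 2) (primeOf K C) hp = satIdeal K D C := by
  apply le_antisymm
  · intro f hf
    rw [mem_contractAt_iff] at hf
    obtain ⟨u, hu, huf⟩ := hf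
    exact sat_of_mul_mem K hu (sq_le_satIdeal K D C huf)
  · rw [satIdeal, Ideal.span_le]
    rintro g ⟨σ, hσ, rfl⟩
    rw [SetLike.mem_coe, mem_contractAt_iff]
    obtain ⟨ρ, hρ, e, he, f', hf', hle⟩ := hσ
    refine ⟨monomial ρ 1, ?_, ?_⟩
    · rw [not_mem_primeOf_iff]
      refine ⟨ρ, ?_, hρ⟩
      rw [mem_support_iff]
      classical
      rw [coeff_monomial, if_pos rfl]
      exact one_ne_zero
    · rw [monomial_mul, one_mul]
      rw [mem_sq_iff]
      intro μ hμ
      classical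
      rw [support_monomial, if_neg one_ne_zero, Finset.mem_singleton] at hμ
      subst hμ
      exact ⟨e, he, f', hf', hle⟩

lemma edgeIdeal_le_primeOf {D : WOGraph s} {C : Finset (Fin s)} (hC : IsCover D C) :
    D.edgeIdeal K ≤ primeOf K C := by
  rw [edgeIdeal_eq_span, Ideal.span_le]
  rintro g ⟨μ, ⟨e, he, rfl⟩, rfl⟩
  rw [SetLike.mem_coe, mem_primeOf_iff]
  intro τ hτ
  classical
  rw [support_monomial, if_neg one_ne_zero, Finset.mem_singleton] at hτ
  subst hτ
  rcases hC e he with h | h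
  · refine ⟨e.1, h, ?_⟩
    have := one_le_evec (D := D) (e := e) (Or.inl rfl)
    omega
  · refine ⟨e.2, h, ?_⟩
    have := one_le_evec (D := D) (e := e) (Or.inr rfl)
    omega

lemma gen_mem_prime {q : Ideal (MvPolynomial (Fin s) K)} (hq : q.IsPrime) {D : WOGraph s}
    {e : Fin s × Fin s}
    (h : (X e.1 * X e.2 ^ D.w e.2 : MvPolynomial (Fin s) K) ∈ q) :
    (X e.1 : MvPolynomial (Fin s) K) ∈ q ∨ (X e.2 : MvPolynomial (Fin s) K) ∈ q := by
  rcases hq.mem_or_mem h with h | h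
  · exact Or.inl h
  · exact Or.inr (hq.mem_of_pow_mem _ h)

lemma gen_mem_edgeIdeal (D : WOGraph s) {e : Fin s × Fin s} (he : e ∈ D.E) :
    (X e.1 * X e.2 ^ D.w e.2 : MvPolynomial (Fin s) K) ∈ D.edgeIdeal K :=
  Ideal.subset_span ⟨e, he, rfl⟩

lemma minCover_mem_minimalPrimes {D : WOGraph s} {C : Finset (Fin s)} (hC : IsMinCover D C) :
    primeOf K C ∈ (D.edgeIdeal K).minimalPrimes := by
  constructor
  · exact ⟨primeOf_isPrime K C, edgeIdeal_le_primeOf K hC.1⟩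
  · rintro q ⟨hq, hIq⟩ hle
    rw [primeOf, Ideal.span_le]
    rintro g ⟨i, hi, rfl⟩
    rw [SetLike.mem_coe]
    have hiC : i ∈ C := hi
    obtain ⟨e, he, hcase⟩ := minCover_edge hC hiC
    rcases hcase with ⟨h1, h2⟩ | ⟨h1, h2⟩
    · rcases gen_mem_prime K hq (hIq (gen_mem_edgeIdeal K D he)) with hX | hX
      · rwa [h1] at hX
      · exact absurd ((X_mem_primeOf_iff K).mp (hle hX)) h2
    · rcases gen_mem_prime K hq (hIq (gen_mem_edgeIdeal K D he)) with hX | hX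
      · exact absurd ((X_mem_primeOf_iff K).mp (hle hX)) h2
      · rwa [h1] at hX

lemma minimalPrime_eq {D : WOGraph s} {p : Ideal (MvPolynomial (Fin s) K)}
    (hp : p ∈ (D.edgeIdeal K).minimalPrimes) :
    ∃ C : Finset (Fin s), IsMinCover D C ∧ p = primeOf K C := by
  classical
  obtain ⟨⟨hpr, hIp⟩, hmin⟩ := hp
  set C : Finset (Fin s) :=
    Finset.univ.filter (fun i => (X i : MvPolynomial (Fin s) K) ∈ p) with hCdef
  have hXC : ∀ i, i ∈ C ↔ (X i : MvPolynomial (Fin s) K) ∈ p := by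
    intro i
    simp [hCdef]
  have hCov : IsCover D C := by
    intro e he
    rcases gen_mem_prime K hpr (hIp (gen_mem_edgeIdeal K D he)) with h | h
    · exact Or.inl ((hXC _).mpr h)
    · exact Or.inr ((hXC _).mpr h)
  have hle : primeOf K C ≤ p := by
    rw [primeOf, Ideal.span_le]
    rintro g ⟨i, hi, rfl⟩
    exact (hXC i).mp hi
  have hge : p ≤ primeOf K C := hmin ⟨primeOf_isPrime K C, edgeIdeal_le_primeOf K hCov⟩ hle
  have hpeq : p = primeOf K C := le_antisymm hge hle
  refine ⟨C, ⟨hCov, ?_⟩, hpeq⟩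
  intro C' hsub hCov'
  have h1 : primeOf K C' ≤ p := by
    rw [primeOf, Ideal.span_le]
    rintro g ⟨i, hi, rfl⟩
    exact (hXC i).mp (hsub hi)
  have h2 : p ≤ primeOf K C' := hmin ⟨primeOf_isPrime K C', edgeIdeal_le_primeOf K hCov'⟩ h1
  apply Finset.Subset.antisymm hsub
  intro i hi
  exact (X_mem_primeOf_iff K).mp (h2 ((hXC i).mp hi))

lemma witness_mem_symbolic {D : WOGraph s} {ν : Fin s →₀ ℕ}
    (hν : ∀ C, IsMinCover D C → SatCond D C ν) :
    (monomial ν 1 : MvPolynomial (Fin s) K) ∈ symbolicPower (D.edgeIdeal K) 2 := by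
  rw [symbolicPower]
  rw [Submodule.mem_iInf]
  intro p
  rw [Submodule.mem_iInf]
  intro hp
  obtain ⟨C, hC, hpeq⟩ := minimalPrime_eq K hp
  subst hpeq
  rw [contract_eq K D C]
  exact monomial_mem_satIdeal K (mem_satSet_iff.mpr (hν C hC)) 1

lemma symbolic_le_satIdeal {D : WOGraph s} {C : Finset (Fin s)} (hC : IsMinCover D C) :
    symbolicPower (D.edgeIdeal K) 2 ≤ satIdeal K D C := by
  rw [symbolicPower]
  have h1 := iInf_le (fun p => ⨅ (hp : p ∈ (D.edgeIdeal K).minimalPrimes),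
    contractAt (D.edgeIdeal K ^ 2) p hp.1.1) (primeOf K C)
  have h2 := iInf_le (fun (hp : primeOf K C ∈ (D.edgeIdeal K).minimalPrimes) =>
    contractAt (D.edgeIdeal K ^ 2) (primeOf K C) hp.1.1) (minCover_mem_minimalPrimes K hC)
  refine le_trans (le_trans h1 h2) ?_
  rw [contract_eq K D C]

end Poly2

end WOSP


/-- **Theorem (I² = I⁽²⁾).** For a weighted oriented graph `D` with underlying graph `G`,
`I(D)² = I(D)^{(2)}` if and only if every vertex of `V⁺(D)` is a sink and `G` has no
triangles (no clique on 3 vertices). -/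
theorem edgeIdeal_sq_eq_symbolicPower_two_iff {s : ℕ} (K : Type*) [Field K]
    (D : WOGraph s) :
    D.edgeIdeal K ^ 2 = symbolicPower (D.edgeIdeal K) 2 ↔
      ((∀ i ∈ D.Vplus, D.IsSink i) ∧ D.underlying.CliqueFree 3) := by
  classical
  constructor
  · intro heq
    have hwit : ∀ ν : Fin s →₀ ℕ,
        (∀ C, WOSP.IsMinCover D C → WOSP.SatCond D C ν) → WOSP.Exp2 D ν := by
      intro ν hν
      have h1 := WOSP.witness_mem_symbolic K hν
      rw [← heq] at h1
      refine (WOSP.mem_sq_iff K D).mp h1 ν ?_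
      rw [MvPolynomial.mem_support_iff, MvPolynomial.coeff_monomial, if_pos rfl]
      exact one_ne_zero
    have hVp : ∀ i ∈ D.Vplus, D.IsSink i := by
      intro b hb
      by_contra hns
      rw [WOGraph.IsSink] at hns
      push_neg at hns
      obtain ⟨c, hbc⟩ := hns
      have hb' : 1 < D.w b := hb
      have hsrc : ∃ a, (a, b) ∈ D.E := by
        by_contra hsrc
        push_neg at hsrc
        have := D.source_weight_one b hsrc
        omega
      obtain ⟨a, hab⟩ := hsrc
      obtain ⟨ν, hν1, hν2⟩ := WOSP.lemCa hab hbc (by omega)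
      exact hν1 (hwit ν hν2)
    refine ⟨hVp, ?_⟩
    by_contra hK
    rw [SimpleGraph.CliqueFree] at hK
    push_neg at hK
    obtain ⟨t, ht⟩ := hK
    rw [SimpleGraph.is3Clique_iff] at ht
    obtain ⟨a, b, c, hab, hac, hbc, -⟩ := ht
    have h1' : ∀ i, 1 < D.w i → ∀ j, (i, j) ∉ D.E := fun i hi => hVp i hi
    have adjE : ∀ {u v : Fin s}, D.underlying.Adj u v → ((u, v) ∈ D.E ∨ (v, u) ∈ D.E) := by
      intro u v huv
      rw [WOGraph.underlying, SimpleGraph.fromRel_adj] at huv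
      exact huv.2
    have hweight : ∀ u v, D.underlying.Adj u v → 1 < D.w u → 1 < D.w v → False := by
      intro u v huv hu hv
      rcases adjE huv with h | h
      · exact h1' u hu v h
      · exact h1' v hv u h
    have wpos := D.w_pos
    obtain ⟨ν, hν1, hν2⟩ :
        ∃ ν, ¬WOSP.Exp2 D ν ∧ ∀ C, WOSP.IsMinCover D C → WOSP.SatCond D C ν := by
      by_cases ha : 1 < D.w a
      · have hwb : D.w b = 1 := by
          by_contra h
          exact hweight a b hab ha (lt_of_le_of_ne (wpos b) (Ne.symm h))
        have hwc : D.w c = 1 := by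
          by_contra h
          exact hweight a c hac ha (lt_of_le_of_ne (wpos c) (Ne.symm h))
        exact WOSP.lemCb h1' hbc.ne (Ne.symm hab.ne) (Ne.symm hac.ne) (adjE hbc)
          (adjE hab.symm) (adjE hac.symm) hwb hwc
      · have hwa : D.w a = 1 := by have := wpos a; omega
        by_cases hbw : 1 < D.w b
        · have hwc : D.w c = 1 := by
            by_contra h
            exact hweight b c hbc hbw (lt_of_le_of_ne (wpos c) (Ne.symm h))
          exact WOSP.lemCb h1' hac.ne hab.ne (Ne.symm hbc.ne) (adjE hac) (adjE hab)
            (adjE hbc.symm) hwa hwc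
        · have hwb : D.w b = 1 := by have := wpos b; omega
          exact WOSP.lemCb h1' hab.ne hac.ne hbc.ne (adjE hab) (adjE hac) (adjE hbc) hwa hwb
    exact hν1 (hwit ν hν2)
  · rintro ⟨h1, h2⟩
    have h1' : ∀ i, 1 < D.w i → ∀ j, (i, j) ∉ D.E := fun i hi => h1 i hi
    apply le_antisymm
    · rw [symbolicPower]
      exact le_iInf fun p => le_iInf fun hp => Ideal.le_comap_map
    · intro f hf
      rw [WOSP.mem_sq_iff]
      intro μ hμ
      apply WOSP.lemB h1' h2
      intro C hC
      have h3 : f ∈ WOSP.satIdeal K D C := WOSP.symbolic_le_satIdeal K hC hf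
      exact WOSP.mem_satSet_iff.mp ((WOSP.mem_satIdeal_iff K).mp h3 μ hμ)
end

section
/- Let D be a weighted oriented graph with edge ideal I(D) and let I(D) = q_1 ∩ ⋯ ∩ q_m be the (unique irredundant) irreducible decomposition of I(D) into irreducible monomial ideals. If some vertex v ∈ V⁺(D) is neither a source nor a sink (i.e., v has both an incoming and an outgoing edge), then ⋂_{i=1}^m q_i² is not contained in I(D)². -/
open MvPolynomial Pointwise

/-- For `b ∈ ℕ^s \ {0}`, the irreducible monomial ideal
`q_b = ({t_i^{b_i} : b_i ≥ 1})`. -/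
noncomputable def irredIdeal (K : Type*) [Field K] {s : ℕ} (b : Fin s → ℕ) :
    Ideal (MvPolynomial (Fin s) K) :=
  Ideal.span { f | ∃ i : Fin s, 1 ≤ b i ∧ f = X i ^ b i }

lemma Xmul_eq_monomial' {s : ℕ} (K : Type*) [Field K] (a c : Fin s) (n : ℕ) :
    (X a * X c ^ n : MvPolynomial (Fin s) K) = monomial (Finsupp.single a 1 + Finsupp.single c n) 1 := by
  rw [X_pow_eq_monomial, X, monomial_mul, one_mul]

lemma irredIdeal_eq' {s : ℕ} (K : Type*) [Field K] (b : Fin s → ℕ) :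
    irredIdeal K b =
      Ideal.span ((fun s0 => monomial s0 (1 : K)) ''
        {d0 : Fin s →₀ ℕ | ∃ i : Fin s, 1 ≤ b i ∧ d0 = Finsupp.single i (b i)}) := by
  rw [irredIdeal]
  congr 1
  ext g
  constructor
  · rintro ⟨i, hi, rfl⟩
    exact ⟨Finsupp.single i (b i), ⟨i, hi, rfl⟩, (X_pow_eq_monomial).symm⟩
  · rintro ⟨d0, ⟨i, hi, rfl⟩, rfl⟩
    exact ⟨i, hi, (X_pow_eq_monomial).symm⟩

lemma extract' {s : ℕ} (K : Type*) [Field K] (b : Fin s → ℕ) (w : Fin s → ℕ) (a c : Fin s)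
    (hac : a ≠ c)
    (h : (X a * X c ^ w c : MvPolynomial (Fin s) K) ∈ irredIdeal K b) :
    b a = 1 ∨ (1 ≤ b c ∧ b c ≤ w c) := by
  classical
  rw [irredIdeal_eq'] at h
  have hsupp : (Finsupp.single a 1 + Finsupp.single c (w c)) ∈
      (X a * X c ^ w c : MvPolynomial (Fin s) K).support := by
    rw [Xmul_eq_monomial', support_monomial, if_neg one_ne_zero]
    exact Finset.mem_singleton_self _
  obtain ⟨s0, ⟨j, hj1, rfl⟩, hle⟩ := mem_ideal_span_monomial_image.mp h _ hsupp
  have hj := Finsupp.le_def.mp hle j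
  rcases eq_or_ne a j with rfl | hja
  · left
    have hca : c ≠ a := fun hh => hac hh.symm
    simp [Finsupp.single_apply, hca] at hj
    omega
  · rcases eq_or_ne c j with rfl | hjc
    · right
      simp [Finsupp.single_apply, hja] at hj
      omega
    · exfalso
      simp [Finsupp.single_apply, hja, hjc] at hj
      omega

lemma part1' {s : ℕ} (K : Type*) [Field K] (b : Fin s → ℕ) (w : Fin s → ℕ) (u v x : Fin s)
    (hwv : 2 ≤ w v)
    (H1 : b u = 1 ∨ (1 ≤ b v ∧ b v ≤ w v)) (H2 : b v = 1 ∨ (1 ≤ b x ∧ b x ≤ w x)) :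
    (monomial (Finsupp.single u 1 + Finsupp.single v (w v) + Finsupp.single x (w x)) (1:K)) ∈
      (irredIdeal K b) ^ 2 := by
  classical
  set d : Fin s →₀ ℕ :=
    Finsupp.single u 1 + Finsupp.single v (w v) + Finsupp.single x (w x) with hd
  have key : ∀ j k : Fin s, 1 ≤ b j → 1 ≤ b k →
      Finsupp.single j (b j) + Finsupp.single k (b k) ≤ d →
      (monomial d (1:K)) ∈ (irredIdeal K b) ^ 2 := by
    intro j k hj hk hjk
    have h1 : (X j ^ b j : MvPolynomial (Fin s) K) ∈ irredIdeal K b :=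
      Ideal.subset_span ⟨j, hj, rfl⟩
    have h2 : (X k ^ b k : MvPolynomial (Fin s) K) ∈ irredIdeal K b :=
      Ideal.subset_span ⟨k, hk, rfl⟩
    have hdvd : (X j ^ b j * X k ^ b k : MvPolynomial (Fin s) K) ∣ monomial d 1 := by
      rw [X_pow_eq_monomial, X_pow_eq_monomial, monomial_mul, one_mul]
      rw [monomial_dvd_monomial]
      exact ⟨Or.inr hjk, one_dvd _⟩
    obtain ⟨r, hr⟩ := hdvd
    rw [hr, sq]
    exact Ideal.mul_mem_right _ _ (Ideal.mul_mem_mul h1 h2)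
  rcases H1 with hbu | ⟨hbv1, hbv2⟩
  · rcases H2 with hbv | ⟨hbx1, hbx2⟩
    · refine key u v (by omega) (by omega) (Finsupp.le_def.mpr fun i => ?_)
      simp only [hd, Finsupp.add_apply, Finsupp.single_apply, hbu, hbv]
      split_ifs <;> omega
    · refine key u x (by omega) (by omega) (Finsupp.le_def.mpr fun i => ?_)
      simp only [hd, Finsupp.add_apply, Finsupp.single_apply, hbu]
      split_ifs <;> omega
  · rcases H2 with hbv | ⟨hbx1, hbx2⟩
    · refine key v v (by omega) (by omega) (Finsupp.le_def.mpr fun i => ?_)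
      simp only [hd, Finsupp.add_apply, Finsupp.single_apply, hbv]
      split_ifs <;> omega
    · refine key v x (by omega) (by omega) (Finsupp.le_def.mpr fun i => ?_)
      simp only [hd, Finsupp.add_apply, Finsupp.single_apply]
      split_ifs <;> omega
lemma part2 {s : ℕ} (K : Type*) [Field K] (D : WOGraph s) (u v x : Fin s)
    (hu : (u, v) ∈ D.E) (hx : (v, x) ∈ D.E) :
    (monomial (Finsupp.single u 1 + Finsupp.single v (D.w v) + Finsupp.single x (D.w x)) (1:K)) ∉
      D.edgeIdeal K ^ 2 := by
  classical
  intro hf2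
  have huv : u ≠ v := fun h => D.no_loops v (h ▸ hu)
  have hvx : v ≠ x := fun h => D.no_loops v (h ▸ hx)
  have hux : u ≠ x := fun h => D.no_two_orientations v x hx (by rw [← h]; exact hu)
  have hvu := huv.symm
  have hxv := hvx.symm
  have hxu := hux.symm
  set d : Fin s →₀ ℕ :=
    Finsupp.single u 1 + Finsupp.single v (D.w v) + Finsupp.single x (D.w x) with hd
  have hIsq : D.edgeIdeal K ^ 2 ≤ Ideal.span ((fun s0 => monomial s0 (1:K)) ''
      {s0 : Fin s →₀ ℕ | ∃ e ∈ D.E, ∃ e' ∈ D.E,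
        s0 = (Finsupp.single e.1 1 + Finsupp.single e.2 (D.w e.2)) +
          (Finsupp.single e'.1 1 + Finsupp.single e'.2 (D.w e'.2))}) := by
    rw [sq, WOGraph.edgeIdeal, Ideal.span_mul_span']
    refine Ideal.span_le.mpr ?_
    rintro g ⟨g1, ⟨e, he, rfl⟩, g2, ⟨e', he', rfl⟩, rfl⟩
    refine Ideal.subset_span ⟨_, ⟨e, he, e', he', rfl⟩, ?_⟩
    simp only [Xmul_eq_monomial', monomial_mul, one_mul]
  have hdm : d ∈ (monomial d (1:K)).support := by
    rw [support_monomial, if_neg one_ne_zero]; exact Finset.mem_singleton_self _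
  obtain ⟨s0, ⟨⟨a, c⟩, he, ⟨a', c'⟩, he', rfl⟩, hsle⟩ :=
    mem_ideal_span_monomial_image.mp (hIsq hf2) d hdm
  have H : ∀ i : Fin s,
      ((if a = i then 1 else 0) + (if c = i then D.w c else 0)) +
        ((if a' = i then 1 else 0) + (if c' = i then D.w c' else 0)) ≤
      ((if u = i then 1 else 0) + (if v = i then D.w v else 0)) + (if x = i then D.w x else 0) := by
    intro i
    have := Finsupp.le_def.mp hsle i
    simpa [hd, Finsupp.single_apply] using this
  have hwu := D.w_pos u
  have hwx := D.w_pos x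
  have hwv := D.w_pos v
  have hwc := D.w_pos c
  have hwc' := D.w_pos c'
  have hsupp : ∀ y : Fin s,
      1 ≤ ((if a = y then 1 else 0) + (if c = y then D.w c else 0)) +
        ((if a' = y then 1 else 0) + (if c' = y then D.w c' else 0)) →
      u = y ∨ v = y ∨ x = y := by
    intro y hy
    by_contra hne
    push_neg at hne
    have h := H y
    rw [if_neg hne.1, if_neg hne.2.1, if_neg hne.2.2] at h
    omega
  have ha : u = a ∨ v = a ∨ x = a := hsupp a (by rw [if_pos (rfl : a = a)]; omega)
  have hc : u = c ∨ v = c ∨ x = c := hsupp c (by rw [if_pos (rfl : c = c)]; omega)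
  have ha' : u = a' ∨ v = a' ∨ x = a' := hsupp a' (by rw [if_pos (rfl : a' = a')]; omega)
  have hc' : u = c' ∨ v = c' ∨ x = c' := hsupp c' (by rw [if_pos (rfl : c' = c')]; omega)
  rcases ha with rfl | rfl | rfl <;> rcases hc with rfl | rfl | rfl <;>
    rcases ha' with rfl | rfl | rfl <;> rcases hc' with rfl | rfl | rfl <;>
  first
    | exact D.no_loops _ he
    | exact D.no_loops _ he'
    | exact D.no_two_orientations _ _ hu he
    | exact D.no_two_orientations _ _ hu he'
    | exact D.no_two_orientations _ _ hx he
    | exact D.no_two_orientations _ _ hx he'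
    | (have h1 := H u; have h2 := H v; have h3 := H x;
       simp only [huv, hvx, hux, hvu, hxv, hxu, if_true, if_false, ite_true, ite_false,
         reduceIte] at h1 h2 h3 <;> omega)

/-- **Lemma.** Let `D` be a weighted oriented graph and let
`I(D) = q_{α_1} ∩ ⋯ ∩ q_{α_m}` be the (irredundant) irreducible decomposition of its
edge ideal. If some vertex `v ∈ V⁺(D)` is neither a source nor a sink (it has both an
incoming and an outgoing edge), then `⋂_{i=1}^m q_{α_i}²` is not contained in `I(D)²`. -/
theorem iInf_sq_not_le_edgeIdeal_sq {s m : ℕ} (K : Type*) [Field K] (D : WOGraph s)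
    (α : Fin m → (Fin s → ℕ)) (hα : ∀ i, α i ≠ 0)
    (hdec : D.edgeIdeal K = ⨅ i, irredIdeal K (α i))
    (hirr : ∀ j : Fin m,
      D.edgeIdeal K ≠ ⨅ i ∈ ({j}ᶜ : Set (Fin m)), irredIdeal K (α i))
    (v : Fin s) (hv : v ∈ D.Vplus)
    (hin : ∃ u, (u, v) ∈ D.E) (hout : ∃ x, (v, x) ∈ D.E) :
    ¬ (⨅ i, irredIdeal K (α i) ^ 2) ≤ D.edgeIdeal K ^ 2 := by
  classical
  obtain ⟨u, hu⟩ := hin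
  obtain ⟨x, hx⟩ := hout
  intro hle
  have huv : u ≠ v := fun h => D.no_loops v (h ▸ hu)
  have hvx : v ≠ x := fun h => D.no_loops v (h ▸ hx)
  have hwv : 2 ≤ D.w v := hv
  have hfmem : (monomial (Finsupp.single u 1 + Finsupp.single v (D.w v) +
      Finsupp.single x (D.w x)) (1:K)) ∈ ⨅ i, irredIdeal K (α i) ^ 2 := by
    rw [Submodule.mem_iInf]
    intro i
    have hq : D.edgeIdeal K ≤ irredIdeal K (α i) := hdec ▸ iInf_le _ i
    have h1 : (X u * X v ^ D.w v : MvPolynomial (Fin s) K) ∈ irredIdeal K (α i) :=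
      hq (Ideal.subset_span ⟨(u, v), hu, rfl⟩)
    have h2 : (X v * X x ^ D.w x : MvPolynomial (Fin s) K) ∈ irredIdeal K (α i) :=
      hq (Ideal.subset_span ⟨(v, x), hx, rfl⟩)
    exact part1' K (α i) D.w u v x hwv (extract' K (α i) D.w u v huv h1)
      (extract' K (α i) D.w v x hvx h2)
  exact part2 K D u v x hu hx (hle hfmem)
end

section
/- Let D be a weighted oriented graph with edge ideal I(D). If p_1, …, p_r are the minimal primes of I(D), then for each p_i there is exactly one irreducible component q_i of I(D) with rad(q_i) = p_i, and I(D)^{(n)} = ⋂_{i=1}^r q_i^n for all n ≥ 1. -/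
open MvPolynomial Pointwise

namespace WOGAux

open Finsupp

variable {s : ℕ}



open Finsupp

variable {s : ℕ}

/-! ### The auxiliary "key" order -/

noncomputable def fC (C : Set (Fin s)) (m : Fin s →₀ ℕ) : Fin s →₀ ℕ :=
  letI := Classical.decPred (· ∈ C)
  m.filter (· ∈ C)

lemma fC_apply_mem (C : Set (Fin s)) {i : Fin s} (hi : i ∈ C) (m : Fin s →₀ ℕ) :
    fC C m i = m i := by
  classical
  simp only [fC, Finsupp.filter_apply]
  exact if_pos hi

lemma fC_apply_not_mem (C : Set (Fin s)) {i : Fin s} (hi : i ∉ C) (m : Fin s →₀ ℕ) :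
    fC C m i = 0 := by
  classical
  simp only [fC, Finsupp.filter_apply]
  exact if_neg hi

lemma fC_add (C : Set (Fin s)) (a b : Fin s →₀ ℕ) : fC C (a + b) = fC C a + fC C b := by
  classical
  ext i
  by_cases hi : i ∈ C
  · simp [fC_apply_mem C hi]
  · simp [fC_apply_not_mem C hi]

lemma fC_eq_zero_iff (C : Set (Fin s)) (m : Fin s →₀ ℕ) :
    fC C m = 0 ↔ ∀ i ∈ C, m i = 0 := by
  constructor
  · intro h i hi
    have := congrArg (fun f : Fin s →₀ ℕ => f i) h
    simpa [fC_apply_mem C hi] using this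
  · intro h
    ext i
    by_cases hi : i ∈ C
    · simp [fC_apply_mem C hi, h i hi]
    · simp [fC_apply_not_mem C hi]

noncomputable def key (C : Set (Fin s)) (m : Fin s →₀ ℕ) :
    Lex (Lex (Fin s →₀ ℕ) × Lex (Fin s →₀ ℕ)) :=
  toLex (toLex (fC C m), toLex m)

lemma key_injective (C : Set (Fin s)) : Function.Injective (key C) := by
  intro a b h
  have h2 : (ofLex (key C a)).2 = (ofLex (key C b)).2 := by rw [h]
  exact toLex.injective h2

lemma key_lt_iff {C : Set (Fin s)} {a b : Fin s →₀ ℕ} :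
    key C a < key C b ↔
      toLex (fC C a) < toLex (fC C b) ∨
        (toLex (fC C a) = toLex (fC C b) ∧ toLex a < toLex b) :=
  Prod.Lex.lt_iff

lemma key_le_iff {C : Set (Fin s)} {a b : Fin s →₀ ℕ} :
    key C a ≤ key C b ↔
      toLex (fC C a) < toLex (fC C b) ∨
        (toLex (fC C a) = toLex (fC C b) ∧ toLex a ≤ toLex b) :=
  Prod.Lex.le_iff

lemma key_add_lt_left (C : Set (Fin s)) (c : Fin s →₀ ℕ) {a b : Fin s →₀ ℕ}
    (h : key C a < key C b) : key C (c + a) < key C (c + b) := by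
  rw [key_lt_iff] at h ⊢
  rcases h with h | ⟨h1, h2⟩
  · left
    rw [fC_add, fC_add, toLex_add, toLex_add]
    exact add_lt_add_right h _
  · right
    constructor
    · rw [fC_add, fC_add, toLex_add, toLex_add, h1]
    · rw [toLex_add, toLex_add]
      exact add_lt_add_right h2 _

lemma key_add_lt_right (C : Set (Fin s)) (c : Fin s →₀ ℕ) {a b : Fin s →₀ ℕ}
    (h : key C a < key C b) : key C (a + c) < key C (b + c) := by
  rw [add_comm a c, add_comm b c]; exact key_add_lt_left C c h

lemma key_add_le_left (C : Set (Fin s)) (c : Fin s →₀ ℕ) {a b : Fin s →₀ ℕ}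
    (h : key C a ≤ key C b) : key C (c + a) ≤ key C (c + b) := by
  rcases h.lt_or_eq with h | h
  · exact (key_add_lt_left C c h).le
  · rw [key_injective C h]

lemma toLex_fC_le_of_key_le {C : Set (Fin s)} {a b : Fin s →₀ ℕ}
    (h : key C a ≤ key C b) : toLex (fC C a) ≤ toLex (fC C b) := by
  rw [key_le_iff] at h
  rcases h with h | ⟨h1, _⟩
  · exact h.le
  · exact h1.le



/-! ### Extraction of a coefficient in a product -/

variable {K : Type*} [Field K]

lemma key_coeff_mul (C : Set (Fin s)) {u x : MvPolynomial (Fin s) K}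
    {Su Sx : Finset (Fin s →₀ ℕ)}
    (hSu : Su ⊆ u.support) (hSx : Sx ⊆ x.support)
    {mu mx : Fin s →₀ ℕ} (hmu : mu ∈ Su) (hmx : mx ∈ Sx)
    (hminu : ∀ a ∈ Su, key C mu ≤ key C a) (hminx : ∀ b ∈ Sx, key C mx ≤ key C b)
    (hpairs : ∀ a ∈ u.support, ∀ b ∈ x.support, a + b = mu + mx → a ∈ Su ∧ b ∈ Sx) :
    MvPolynomial.coeff (mu + mx) (u * x) =
      MvPolynomial.coeff mu u * MvPolynomial.coeff mx x := by
  classical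
  rw [MvPolynomial.coeff_mul]
  apply Finset.sum_eq_single_of_mem (mu, mx) (Finset.HasAntidiagonal.mem_antidiagonal.2 rfl)
  intro ab hab hne
  by_contra h0
  have h1 : MvPolynomial.coeff ab.1 u ≠ 0 := fun h => h0 (by rw [h, zero_mul])
  have h2 : MvPolynomial.coeff ab.2 x ≠ 0 := fun h => h0 (by rw [h, mul_zero])
  have hau : ab.1 ∈ u.support := MvPolynomial.mem_support_iff.2 h1
  have hbx : ab.2 ∈ x.support := MvPolynomial.mem_support_iff.2 h2
  have habsum : ab.1 + ab.2 = mu + mx := Finset.HasAntidiagonal.mem_antidiagonal.1 hab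
  obtain ⟨haS, hbS⟩ := hpairs _ hau _ hbx habsum
  by_cases h1' : ab.1 = mu
  · have h2' := habsum
    rw [h1'] at h2'
    exact hne (Prod.ext h1' (add_left_cancel h2'))
  · have hlt : key C mu < key C ab.1 :=
      lt_of_le_of_ne (hminu _ haS) (fun e => h1' (key_injective C e.symm))
    have hle : key C mx ≤ key C ab.2 := hminx _ hbS
    have c1 : key C (mu + mx) ≤ key C (mu + ab.2) := key_add_le_left C mu hle
    have c2 : key C (mu + ab.2) < key C (ab.1 + ab.2) := key_add_lt_right C ab.2 hlt
    rw [habsum] at c2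
    exact absurd (c1.trans_lt c2) (lt_irrefl _)

/-! ### Monomial ideals -/

noncomputable def MI (K : Type*) [Field K] {s : ℕ} (G : Set (Fin s →₀ ℕ)) :
    Ideal (MvPolynomial (Fin s) K) :=
  Ideal.span ((fun g => monomial g (1 : K)) '' G)

lemma mem_MI_iff {G : Set (Fin s →₀ ℕ)} {f : MvPolynomial (Fin s) K} :
    f ∈ MI K G ↔ ∀ m ∈ f.support, ∃ g ∈ G, g ≤ m :=
  MvPolynomial.mem_ideal_span_monomial_image

lemma support_monomial_one (m : Fin s →₀ ℕ) :
    (monomial m (1 : K)).support = {m} := by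
  classical
  rw [MvPolynomial.support_monomial, if_neg (one_ne_zero)]

lemma monomial_one_mem_MI_iff {G : Set (Fin s →₀ ℕ)} {m : Fin s →₀ ℕ} :
    monomial m (1 : K) ∈ MI K G ↔ ∃ g ∈ G, g ≤ m := by
  rw [mem_MI_iff]
  simp [support_monomial_one]

/-! ### The prime ideal generated by the variables in `C` -/

noncomputable def PC (K : Type*) [Field K] {s : ℕ} (C : Set (Fin s)) :
    Ideal (MvPolynomial (Fin s) K) :=
  MI K {g | ∃ i ∈ C, g = Finsupp.single i 1}

lemma mem_PC_iff {C : Set (Fin s)} {f : MvPolynomial (Fin s) K} :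
    f ∈ PC K C ↔ ∀ m ∈ f.support, ∃ i ∈ C, 1 ≤ m i := by
  rw [PC, mem_MI_iff]
  apply forall₂_congr
  intro m _
  constructor
  · rintro ⟨g, ⟨i, hi, rfl⟩, hle⟩
    exact ⟨i, hi, Finsupp.single_le_iff.1 hle⟩
  · rintro ⟨i, hi, h⟩
    exact ⟨Finsupp.single i 1, ⟨i, hi, rfl⟩, Finsupp.single_le_iff.2 h⟩

lemma not_mem_PC_iff {C : Set (Fin s)} {f : MvPolynomial (Fin s) K} :
    f ∉ PC K C ↔ ∃ m ∈ f.support, fC C m = 0 := by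
  rw [mem_PC_iff]
  push_neg
  apply exists_congr; intro m
  apply and_congr_right'
  rw [fC_eq_zero_iff]
  constructor
  · intro h i hi
    have := h i hi
    omega
  · intro h i hi
    rw [h i hi]
    omega

lemma X_eq_monomial (i : Fin s) :
    (X i : MvPolynomial (Fin s) K) = monomial (Finsupp.single i 1) 1 := by
  rw [← pow_one (X i : MvPolynomial (Fin s) K), MvPolynomial.X_pow_eq_monomial]

lemma X_mem_PC_iff {C : Set (Fin s)} {i : Fin s} :
    (X i : MvPolynomial (Fin s) K) ∈ PC K C ↔ i ∈ C := by
  constructor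
  · intro h
    rw [X_eq_monomial, PC, monomial_one_mem_MI_iff] at h
    obtain ⟨g, ⟨j, hj, rfl⟩, hle⟩ := h
    have := Finsupp.single_le_iff.1 hle
    rcases eq_or_ne j i with rfl | hne
    · exact hj
    · rw [Finsupp.single_eq_of_ne' (Ne.symm hne)] at this; omega
  · intro h
    rw [X_eq_monomial, PC, monomial_one_mem_MI_iff]
    exact ⟨Finsupp.single i 1, ⟨i, h, rfl⟩, le_refl _⟩

lemma PC_mono {C C' : Set (Fin s)} (h : C ⊆ C') : PC K C ≤ PC (s := s) K C' := by
  apply Ideal.span_mono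
  apply Set.image_mono
  rintro g ⟨i, hi, rfl⟩
  exact ⟨i, h hi, rfl⟩

lemma PC_inj {C C' : Set (Fin s)} (h : PC K C = PC (s := s) K C') : C = C' := by
  ext i
  rw [← X_mem_PC_iff (K := K) (C := C), ← X_mem_PC_iff (K := K) (C := C'), h]

lemma PC_isPrime (C : Set (Fin s)) : (PC K C).IsPrime := by
  classical
  constructor
  · intro h
    have h1 : (1 : MvPolynomial (Fin s) K) ∈ PC K C := h ▸ Submodule.mem_top
    rw [show (1 : MvPolynomial (Fin s) K) = monomial 0 1 by simp, PC,
      monomial_one_mem_MI_iff] at h1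
    obtain ⟨g, ⟨i, hi, rfl⟩, hle⟩ := h1
    have := Finsupp.single_le_iff.1 hle
    simp at this
  · intro f g hfg
    by_contra hcon
    push_neg at hcon
    obtain ⟨hf, hg⟩ := hcon
    rw [not_mem_PC_iff] at hf hg
    obtain ⟨m1, hm1, hm1z⟩ := hf
    obtain ⟨m2, hm2, hm2z⟩ := hg
    set Sf := f.support.filter (fun m => fC C m = 0) with hSf
    set Sg := g.support.filter (fun m => fC C m = 0) with hSg
    have hSfne : Sf.Nonempty := ⟨m1, Finset.mem_filter.2 ⟨hm1, hm1z⟩⟩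
    have hSgne : Sg.Nonempty := ⟨m2, Finset.mem_filter.2 ⟨hm2, hm2z⟩⟩
    obtain ⟨mf, hmf, hminf⟩ := Finset.exists_min_image Sf (key C) hSfne
    obtain ⟨mg, hmg, hming⟩ := Finset.exists_min_image Sg (key C) hSgne
    have hpairs : ∀ a ∈ f.support, ∀ b ∈ g.support, a + b = mf + mg → a ∈ Sf ∧ b ∈ Sg := by
      intro a ha b hb hab
      have hfCmf : fC C mf = 0 := (Finset.mem_filter.1 hmf).2
      have hfCmg : fC C mg = 0 := (Finset.mem_filter.1 hmg).2
      have hsum : fC C a + fC C b = 0 := by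
        rw [← fC_add, hab, fC_add, hfCmf, hfCmg, add_zero]
      have ha0 : fC C a = 0 := by
        ext i
        have h' := congrArg (fun f : Fin s →₀ ℕ => f i) hsum
        simp only [Finsupp.add_apply, Finsupp.coe_zero, Pi.zero_apply] at h'
        simp only [Finsupp.coe_zero, Pi.zero_apply]
        omega
      have hb0 : fC C b = 0 := by
        ext i
        have h' := congrArg (fun f : Fin s →₀ ℕ => f i) hsum
        simp only [Finsupp.add_apply, Finsupp.coe_zero, Pi.zero_apply] at h'
        simp only [Finsupp.coe_zero, Pi.zero_apply]
        omega
      exact ⟨Finset.mem_filter.2 ⟨ha, ha0⟩, Finset.mem_filter.2 ⟨hb, hb0⟩⟩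
    have hcoeff := key_coeff_mul C (Finset.filter_subset _ _) (Finset.filter_subset _ _)
      hmf hmg hminf hming hpairs
    have hne : MvPolynomial.coeff (mf + mg) (f * g) ≠ 0 := by
      rw [hcoeff]
      exact mul_ne_zero (MvPolynomial.mem_support_iff.1 (Finset.mem_filter.1 hmf).1)
        (MvPolynomial.mem_support_iff.1 (Finset.mem_filter.1 hmg).1)
    have hmem : mf + mg ∈ (f * g).support := MvPolynomial.mem_support_iff.2 hne
    obtain ⟨i, hi, hile⟩ := mem_PC_iff.1 hfg _ hmem
    have h1 : (mf + mg) i = 0 := by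
      have e1 : mf i = 0 := by
        have := congrArg (fun f : Fin s →₀ ℕ => f i) (Finset.mem_filter.1 hmf).2
        simpa [fC_apply_mem C hi] using this
      have e2 : mg i = 0 := by
        have := congrArg (fun f : Fin s →₀ ℕ => f i) (Finset.mem_filter.1 hmg).2
        simpa [fC_apply_mem C hi] using this
      simp [e1, e2]
    omega

/-! ### The colon lemma -/

lemma colon_MI (C : Set (Fin s)) {G : Set (Fin s →₀ ℕ)}
    (hG : ∀ g ∈ G, ∀ j, j ∉ C → g j = 0)
    {u x : MvPolynomial (Fin s) K} (hu : u ∉ PC K C) (h : u * x ∈ MI K G) :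
    x ∈ MI K G := by
  classical
  by_contra hx
  have hx' : ∃ m ∈ x.support, ¬ ∃ g ∈ G, g ≤ m := by
    by_contra hc
    push_neg at hc
    exact hx (mem_MI_iff.2 hc)
  obtain ⟨m0, hm0, hm0bad⟩ := hx'
  set T := x.support.filter (fun m => ¬ ∃ g ∈ G, g ≤ m) with hT
  have hTne : T.Nonempty := ⟨m0, Finset.mem_filter.2 ⟨hm0, hm0bad⟩⟩
  rw [not_mem_PC_iff] at hu
  obtain ⟨n0, hn0, hn0z⟩ := hu
  set U := u.support.filter (fun m => fC C m = 0) with hU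
  have hUne : U.Nonempty := ⟨n0, Finset.mem_filter.2 ⟨hn0, hn0z⟩⟩
  obtain ⟨mu, hmuU, hminu⟩ := Finset.exists_min_image U (key C) hUne
  obtain ⟨mx, hmxT, hminx⟩ := Finset.exists_min_image T (key C) hTne
  have hfCmu : fC C mu = 0 := (Finset.mem_filter.1 hmuU).2
  have hmxbad : ¬ ∃ g ∈ G, g ≤ mx := (Finset.mem_filter.1 hmxT).2
  -- no generator divides mu + mx
  have hmubad : ¬ ∃ g ∈ G, g ≤ mu + mx := by
    rintro ⟨g, hgG, hgle⟩
    apply hmxbad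
    refine ⟨g, hgG, ?_⟩
    intro j
    by_cases hj : j ∈ C
    · have h1 : g j ≤ mu j + mx j := hgle j
      have h2 : mu j = 0 := by
        have := congrArg (fun f : Fin s →₀ ℕ => f j) hfCmu
        simpa [fC_apply_mem C hj] using this
      simpa [h2] using h1
    · simp [hG g hgG j hj]
  have hpairs : ∀ a ∈ u.support, ∀ b ∈ x.support, a + b = mu + mx → a ∈ U ∧ b ∈ T := by
    intro a ha b hb hab
    have hbT : b ∈ T := by
      refine Finset.mem_filter.2 ⟨hb, ?_⟩
      rintro ⟨g, hgG, hgle⟩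
      exact hmubad ⟨g, hgG, hgle.trans (by rw [← hab]; exact le_add_self)⟩
    refine ⟨?_, hbT⟩
    -- show fC C a = 0
    have hsum : fC C a + fC C b = fC C mx := by
      rw [← fC_add, hab, fC_add, hfCmu, zero_add]
    have hble : fC C b ≤ fC C mx := by
      intro j
      have := congrArg (fun f : Fin s →₀ ℕ => f j) hsum
      simp only [Finsupp.add_apply] at this
      omega
    have hxle : toLex (fC C mx) ≤ toLex (fC C b) :=
      toLex_fC_le_of_key_le (hminx _ hbT)
    have hbeq : fC C b = fC C mx :=
      toLex.injective (le_antisymm (Finsupp.toLex_monotone hble) hxle)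
    have ha0 : fC C a = 0 := by
      have := hsum
      rw [hbeq] at this
      exact add_right_cancel (a := fC C a) (b := fC C mx) (by rwa [zero_add])
    exact Finset.mem_filter.2 ⟨ha, ha0⟩
  have hcoeff := key_coeff_mul C (Finset.filter_subset _ _) (Finset.filter_subset _ _)
    hmuU hmxT hminu hminx hpairs
  have hne : MvPolynomial.coeff (mu + mx) (u * x) ≠ 0 := by
    rw [hcoeff]
    exact mul_ne_zero (MvPolynomial.mem_support_iff.1 (Finset.mem_filter.1 hmuU).1)
      (MvPolynomial.mem_support_iff.1 (Finset.mem_filter.1 hmxT).1)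
  have hmem : mu + mx ∈ (u * x).support := MvPolynomial.mem_support_iff.2 hne
  exact hmubad (mem_MI_iff.1 h _ hmem)



/-! ### `irredIdeal` as a monomial ideal -/

lemma irredIdeal_eq_MI (b : Fin s → ℕ) :
    irredIdeal K b = MI K {g | ∃ i, 1 ≤ b i ∧ g = Finsupp.single i (b i)} := by
  unfold irredIdeal MI
  congr 1
  ext f
  constructor
  · rintro ⟨i, hi, rfl⟩
    exact ⟨Finsupp.single i (b i), ⟨i, hi, rfl⟩, (MvPolynomial.X_pow_eq_monomial).symm⟩
  · rintro ⟨g, ⟨i, hi, rfl⟩, rfl⟩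
    exact ⟨i, hi, MvPolynomial.X_pow_eq_monomial.symm⟩

lemma mem_irredIdeal_iff {b : Fin s → ℕ} {f : MvPolynomial (Fin s) K} :
    f ∈ irredIdeal K b ↔ ∀ m ∈ f.support, ∃ i, 1 ≤ b i ∧ b i ≤ m i := by
  rw [irredIdeal_eq_MI, mem_MI_iff]
  apply forall₂_congr
  intro m _
  constructor
  · rintro ⟨g, ⟨i, hi, rfl⟩, hle⟩
    exact ⟨i, hi, Finsupp.single_le_iff.1 hle⟩
  · rintro ⟨i, hi, h⟩
    exact ⟨Finsupp.single i (b i), ⟨i, hi, rfl⟩, Finsupp.single_le_iff.2 h⟩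

lemma monomial_one_mem_irredIdeal_iff {b : Fin s → ℕ} {m : Fin s →₀ ℕ} :
    monomial m (1 : K) ∈ irredIdeal K b ↔ ∃ i, 1 ≤ b i ∧ b i ≤ m i := by
  rw [mem_irredIdeal_iff]
  simp [support_monomial_one]

lemma MI_mul_MI (A B : Set (Fin s →₀ ℕ)) :
    MI K A * MI K B = MI K {g | ∃ a ∈ A, ∃ c ∈ B, g = a + c} := by
  unfold MI
  rw [Ideal.span_mul_span]
  congr 1
  ext f
  simp only [Set.mem_iUnion, Set.mem_singleton_iff, Set.mem_image, Set.mem_setOf_eq]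
  constructor
  · rintro ⟨p, ⟨ga, hga, rfl⟩, q, ⟨gb, hgb, rfl⟩, rfl⟩
    exact ⟨ga + gb, ⟨ga, hga, gb, hgb, rfl⟩, by beta_reduce; rw [MvPolynomial.monomial_mul, one_mul]⟩
  · rintro ⟨g, ⟨ga, hga, gb, hgb, rfl⟩, rfl⟩
    exact ⟨monomial ga 1, ⟨ga, hga, rfl⟩, monomial gb 1, ⟨gb, hgb, rfl⟩,
      by beta_reduce; rw [MvPolynomial.monomial_mul, one_mul]⟩

lemma exists_MI_pow (b : Fin s → ℕ) (n : ℕ) :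
    ∃ G : Set (Fin s →₀ ℕ), (∀ g ∈ G, ∀ j, ¬ 1 ≤ b j → g j = 0) ∧
      (irredIdeal K b) ^ n = MI K G := by
  induction n with
  | zero =>
    refine ⟨{0}, ?_, ?_⟩
    · rintro g rfl j _
      rfl
    · rw [pow_zero]
      unfold MI
      rw [Set.image_singleton]
      have h1 : (monomial (0 : Fin s →₀ ℕ) (1 : K)) = 1 := by
        simp
      rw [h1, Ideal.span_singleton_one, Ideal.one_eq_top]
  | succ n ih =>
    obtain ⟨G, hG, hGeq⟩ := ih
    refine ⟨{g | ∃ a ∈ G, ∃ c ∈ {g | ∃ i, 1 ≤ b i ∧ g = Finsupp.single i (b i)}, g = a + c},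
      ?_, ?_⟩
    · rintro g ⟨a, ha, c, ⟨i, hi, rfl⟩, rfl⟩ j hj
      have h1 : a j = 0 := hG a ha j hj
      have h2 : Finsupp.single i (b i) j = 0 := by
        rcases eq_or_ne i j with rfl | hne
        · exact absurd hi hj
        · exact Finsupp.single_eq_of_ne' hne
      simp [h1, h2]
    · rw [pow_succ, hGeq, irredIdeal_eq_MI, MI_mul_MI]

/-! ### Radical of `irredIdeal` -/

lemma irredIdeal_le_PC (b : Fin s → ℕ) :
    irredIdeal K b ≤ PC K {j | 1 ≤ b j} := by
  rw [irredIdeal]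
  apply Ideal.span_le.2
  rintro f ⟨i, hi, rfl⟩
  have hX : (X i : MvPolynomial (Fin s) K) ∈ PC K {j | 1 ≤ b j} := X_mem_PC_iff.2 hi
  exact Ideal.pow_mem_of_mem _ hX _ (by omega)

lemma radical_irredIdeal (b : Fin s → ℕ) :
    (irredIdeal K b).radical = PC K {j | 1 ≤ b j} := by
  apply le_antisymm
  · have := Ideal.radical_mono (irredIdeal_le_PC (K := K) b)
    rwa [(PC_isPrime _).radical] at this
  · rw [PC]
    unfold MI
    apply Ideal.span_le.2
    rintro f ⟨g, ⟨i, hi, rfl⟩, rfl⟩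
    rw [SetLike.mem_coe]
    show monomial (Finsupp.single i 1) (1 : K) ∈ (irredIdeal K b).radical
    rw [Ideal.mem_radical_iff]
    refine ⟨b i, ?_⟩
    have hX : (monomial (Finsupp.single i 1) (1 : K)) = X i := (X_eq_monomial i).symm
    rw [hX]
    exact Ideal.subset_span ⟨i, hi, rfl⟩

/-! ### Irreducibility-style case lemma -/

lemma irredIdeal_eq_inf_cases {m : ℕ} (β : Fin s → ℕ) (T : Finset (Fin m))
    (γ : Fin m → (Fin s → ℕ))
    (h : irredIdeal K β = ⨅ j ∈ T, irredIdeal K (γ j)) {i : Fin m} (hi : i ∈ T) :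
    irredIdeal K β = irredIdeal K (γ i) ∨
      irredIdeal K β = ⨅ j ∈ T.erase i, irredIdeal K (γ j) := by
  classical
  by_contra hcon
  push_neg at hcon
  obtain ⟨h1, h2⟩ := hcon
  have hQle : ∀ j ∈ T, irredIdeal K β ≤ irredIdeal K (γ j) := by
    intro j hj
    rw [h]
    exact iInf₂_le j hj
  have hQleR : irredIdeal K β ≤ ⨅ j ∈ T.erase i, irredIdeal K (γ j) :=
    le_iInf₂ fun j hj => hQle j (Finset.mem_of_mem_erase hj)
  -- a monomial in q_i not in Q
  have hex1 : ∃ m1 : Fin s →₀ ℕ, (∃ k, 1 ≤ γ i k ∧ γ i k ≤ m1 k) ∧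
      ¬ ∃ k, 1 ≤ β k ∧ β k ≤ m1 k := by
    have hne : ¬ irredIdeal K (γ i) ≤ irredIdeal K β := by
      intro hle
      exact h1 (le_antisymm (hQle i hi) hle)
    obtain ⟨f, hf1, hf2⟩ := SetLike.not_le_iff_exists.1 hne
    rw [mem_irredIdeal_iff] at hf1
    have : ∃ m1 ∈ f.support, ¬ ∃ k, 1 ≤ β k ∧ β k ≤ m1 k := by
      by_contra hc
      push_neg at hc
      exact hf2 (mem_irredIdeal_iff.2 hc)
    obtain ⟨m1, hm1, hm1b⟩ := this
    exact ⟨m1, hf1 m1 hm1, hm1b⟩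
  -- a monomial in all q_j, j ∈ T.erase i, not in Q
  have hex2 : ∃ m2 : Fin s →₀ ℕ, (∀ j ∈ T.erase i, ∃ k, 1 ≤ γ j k ∧ γ j k ≤ m2 k) ∧
      ¬ ∃ k, 1 ≤ β k ∧ β k ≤ m2 k := by
    have hne : ¬ (⨅ j ∈ T.erase i, irredIdeal K (γ j)) ≤ irredIdeal K β := by
      intro hle
      exact h2 (le_antisymm hQleR hle)
    obtain ⟨f, hf1, hf2⟩ := SetLike.not_le_iff_exists.1 hne
    have : ∃ m2 ∈ f.support, ¬ ∃ k, 1 ≤ β k ∧ β k ≤ m2 k := by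
      by_contra hc
      push_neg at hc
      exact hf2 (mem_irredIdeal_iff.2 hc)
    obtain ⟨m2, hm2, hm2b⟩ := this
    refine ⟨m2, fun j hj => ?_, hm2b⟩
    have hfj : f ∈ irredIdeal K (γ j) := by
      have := (Submodule.mem_iInf _).1 hf1 j
      exact (Submodule.mem_iInf _).1 this hj
    exact mem_irredIdeal_iff.1 hfj m2 hm2
  obtain ⟨m1, hm1mem, hm1b⟩ := hex1
  obtain ⟨m2, hm2mem, hm2b⟩ := hex2
  set μ := m1 ⊔ m2 with hμ
  have hμ1 : m1 ≤ μ := le_sup_left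
  have hμ2 : m2 ≤ μ := le_sup_right
  have hmem : monomial μ (1 : K) ∈ irredIdeal K β := by
    rw [h]
    rw [Submodule.mem_iInf]
    intro j
    rw [Submodule.mem_iInf]
    intro hj
    rw [monomial_one_mem_irredIdeal_iff]
    rcases eq_or_ne j i with rfl | hne
    · obtain ⟨k, hk1, hk2⟩ := hm1mem
      exact ⟨k, hk1, hk2.trans (hμ1 k)⟩
    · obtain ⟨k, hk1, hk2⟩ := hm2mem j (Finset.mem_erase.2 ⟨hne, hj⟩)
      exact ⟨k, hk1, hk2.trans (hμ2 k)⟩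
  rw [monomial_one_mem_irredIdeal_iff] at hmem
  obtain ⟨k, hk1, hk2⟩ := hmem
  have hsup : μ k = m1 k ⊔ m2 k := Finsupp.sup_apply m1 m2 k
  rw [hsup, le_sup_iff] at hk2
  rcases hk2 with hk2 | hk2
  · exact hm1b ⟨k, hk1, hk2⟩
  · exact hm2b ⟨k, hk1, hk2⟩

/-! ### Localization lemmas -/

lemma mem_of_mul_unit_mem {R : Type*} [CommRing R] {J : Ideal R} {a b : R}
    (hb : IsUnit b) (h : a * b ∈ J) : a ∈ J := by
  have h2 := J.mul_mem_right (↑hb.unit⁻¹) h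
  rwa [mul_assoc, IsUnit.mul_val_inv, mul_one] at h2

lemma mem_contract_iff {R : Type*} [CommRing R] [IsDomain R] {J p : Ideal R}
    [hp : p.IsPrime] {x : R} :
    x ∈ (J.map (algebraMap R (Localization.AtPrime p))).comap
        (algebraMap R (Localization.AtPrime p)) ↔ ∃ u, u ∉ p ∧ u * x ∈ J := by
  have hM : p.primeCompl ≤ nonZeroDivisors R := fun u hu =>
    mem_nonZeroDivisors_of_ne_zero (fun h => hu (h ▸ p.zero_mem))
  constructor
  · intro hx
    rw [Ideal.mem_comap] at hx
    rw [IsLocalization.mem_map_algebraMap_iff p.primeCompl] at hx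
    obtain ⟨⟨j, u⟩, hju⟩ := hx
    rw [← map_mul] at hju
    have hinj : Function.Injective (algebraMap R (Localization.AtPrime p)) :=
      IsLocalization.injective _ hM
    have : x * (u : R) = (j : R) := hinj hju
    refine ⟨u, u.2, ?_⟩
    rw [mul_comm, this]
    exact j.2
  · rintro ⟨u, hu, hux⟩
    rw [Ideal.mem_comap]
    have h1 : algebraMap R (Localization.AtPrime p) (u * x) ∈
        J.map (algebraMap R (Localization.AtPrime p)) :=
      Ideal.mem_map_of_mem _ hux
    have hunit : IsUnit (algebraMap R (Localization.AtPrime p) u) :=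
      IsLocalization.map_units (Localization.AtPrime p) (⟨u, hu⟩ : p.primeCompl)
    rw [map_mul] at h1
    have h2 := Ideal.mul_mem_left _ (↑hunit.unit⁻¹) h1
    rwa [← mul_assoc, IsUnit.val_inv_mul, one_mul] at h2

lemma contractAt_eq {R : Type*} [CommRing R] (J p : Ideal R) [hp' : p.IsPrime]
    (hp : p.IsPrime) :
    contractAt J p hp = (J.map (algebraMap R (Localization.AtPrime p))).comap
      (algebraMap R (Localization.AtPrime p)) := rfl

/-! ### The edge ideal as a monomial ideal -/

lemma edge_gen_eq (a b : Fin s) (w : ℕ) :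
    (X a * X b ^ w : MvPolynomial (Fin s) K) =
      monomial (Finsupp.single a 1 + Finsupp.single b w) 1 := by
  rw [X_eq_monomial, MvPolynomial.X_pow_eq_monomial, MvPolynomial.monomial_mul, one_mul]



lemma monomial_one_mem_PC_iff {C : Set (Fin s)} {m : Fin s →₀ ℕ} :
    monomial m (1 : K) ∈ PC K C ↔ ∃ i ∈ C, 1 ≤ m i := by
  rw [mem_PC_iff]
  simp [support_monomial_one]

/-! ### Main per-prime lemma -/

lemma main_aux {s m : ℕ} (K : Type*) [Field K]
    (D : WOGraph s) (α : Fin m → (Fin s → ℕ))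
    (hdec : D.edgeIdeal K = ⨅ i, irredIdeal K (α i))
    (hirr : ∀ j : Fin m,
      D.edgeIdeal K ≠ ⨅ i ∈ ({j}ᶜ : Set (Fin m)), irredIdeal K (α i))
    (p : Ideal (MvPolynomial (Fin s) K)) (hp : p ∈ (D.edgeIdeal K).minimalPrimes) :
    ∃ i : Fin m, (∀ i', (irredIdeal K (α i')).radical = p ↔ i' = i) ∧
      ∀ n : ℕ, contractAt ((D.edgeIdeal K) ^ n) p hp.1.1 =
        (irredIdeal K (α i)) ^ n := by
  classical
  haveI hpP : p.IsPrime := hp.1.1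
  set I := D.edgeIdeal K with hI
  have hIq : ∀ j, I ≤ irredIdeal K (α j) := fun j => hdec ▸ iInf_le _ j
  -- find a component whose radical is p
  have h1 : (Finset.univ.inf fun i => irredIdeal K (α i)) ≤ I := by
    rw [hdec]; exact le_iInf fun i => Finset.inf_le (Finset.mem_univ i)
  obtain ⟨i₀, -, hi₀le⟩ := (Ideal.IsPrime.inf_le' hpP).1 (h1.trans hp.1.2)
  set C : Set (Fin s) := {j | 1 ≤ α i₀ j} with hC
  have hradC : (irredIdeal K (α i₀)).radical = PC K C := radical_irredIdeal _
  have hPCp : PC K C ≤ p := by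
    have h2 := Ideal.radical_mono hi₀le
    rwa [hpP.radical, hradC] at h2
  have hIPC : I ≤ PC K C := (hIq i₀).trans (hradC ▸ Ideal.le_radical)
  have hpC : p = PC K C := le_antisymm (hp.2 ⟨PC_isPrime C, hIPC⟩ hPCp) hPCp
  -- edge generators
  have hgen : ∀ e ∈ D.E, (X e.1 * X e.2 ^ D.w e.2 : MvPolynomial (Fin s) K) ∈ I :=
    fun e he => Ideal.subset_span ⟨e, he, rfl⟩
  -- C is a vertex cover
  have hcov : ∀ e ∈ D.E, e.1 ∈ C ∨ e.2 ∈ C := by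
    intro e he
    have h2 : (X e.1 * X e.2 ^ D.w e.2 : MvPolynomial (Fin s) K) ∈ PC K C :=
      hIPC (hgen e he)
    rw [edge_gen_eq] at h2
    obtain ⟨i, hiC, hile⟩ := monomial_one_mem_PC_iff.1 h2
    by_cases h3 : i = e.1
    · left; rwa [← h3]
    by_cases h4 : i = e.2
    · right; rwa [← h4]
    exfalso
    rw [Finsupp.add_apply, Finsupp.single_eq_of_ne' (fun h => h3 h.symm),
      Finsupp.single_eq_of_ne' (fun h => h4 h.symm)] at hile
    omega
  -- C is a minimal cover
  have hminC : ∀ j ∈ C, ∃ k, k ∉ C ∧ ((j, k) ∈ D.E ∨ (k, j) ∈ D.E) := by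
    intro j hj
    by_contra hc
    push_neg at hc
    have hedge1 : ∀ k, (j, k) ∈ D.E → k ∈ C := by
      intro k hk
      by_contra hkC
      exact (hc k hkC).1 hk
    have hedge2 : ∀ k, (k, j) ∈ D.E → k ∈ C := by
      intro k hk
      by_contra hkC
      exact (hc k hkC).2 hk
    have hIC' : I ≤ PC K (C \ {j}) := by
      rw [hI, WOGraph.edgeIdeal]
      apply Ideal.span_le.2
      rintro f ⟨e, he, rfl⟩
      rw [SetLike.mem_coe, edge_gen_eq, monomial_one_mem_PC_iff]
      have he' : (e.1, e.2) ∈ D.E := by rwa [Prod.mk.eta]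
      have hv1 : ((Finsupp.single e.1 1 + Finsupp.single e.2 (D.w e.2) : Fin s →₀ ℕ)) e.1 =
          1 + Finsupp.single e.2 (D.w e.2) e.1 := by
        rw [Finsupp.add_apply, Finsupp.single_eq_same]
      have hv2 : ((Finsupp.single e.1 1 + Finsupp.single e.2 (D.w e.2) : Fin s →₀ ℕ)) e.2 =
          Finsupp.single e.1 1 e.2 + D.w e.2 := by
        rw [Finsupp.add_apply, Finsupp.single_eq_same]
      rcases hcov e he with h5 | h5
      · rcases eq_or_ne e.1 j with h6 | h6
        · -- e.1 = j, so e.2 ∈ C and e.2 ≠ j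
          have h7 : e.2 ∈ C := hedge1 e.2 (by rwa [h6] at he')
          have h8 : e.2 ≠ j := by
            intro h8
            exact D.no_loops j (by rwa [h6, h8] at he')
          refine ⟨e.2, ⟨h7, h8⟩, ?_⟩
          have := D.w_pos e.2
          omega
        · refine ⟨e.1, ⟨h5, h6⟩, ?_⟩
          omega
      · rcases eq_or_ne e.2 j with h6 | h6
        · have h7 : e.1 ∈ C := hedge2 e.1 (by rwa [h6] at he')
          have h8 : e.1 ≠ j := by
            intro h8
            exact D.no_loops j (by rwa [h6, h8] at he')
          refine ⟨e.1, ⟨h7, h8⟩, ?_⟩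
          omega
        · refine ⟨e.2, ⟨h5, h6⟩, ?_⟩
          have := D.w_pos e.2
          omega
    have hPC'p : PC K (C \ {j}) ≤ p := by
      rw [hpC]
      exact PC_mono Set.diff_subset
    have hple : p ≤ PC K (C \ {j}) := hp.2 ⟨PC_isPrime _, hIC'⟩ hPC'p
    have hXj : (X j : MvPolynomial (Fin s) K) ∈ p := by
      rw [hpC]; exact X_mem_PC_iff.2 hj
    have := X_mem_PC_iff.1 (hple hXj)
    exact this.2 rfl
  -- the candidate component
  set β : Fin s → ℕ := fun j =>
    if j ∈ C then (if ∃ k, k ∉ C ∧ (j, k) ∈ D.E then 1 else D.w j) else 0 with hβ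
  have hβC : ∀ j, 1 ≤ β j ↔ j ∈ C := by
    intro j
    by_cases hj : j ∈ C
    · constructor
      · intro _; exact hj
      · intro _
        by_cases ho : ∃ k, k ∉ C ∧ (j, k) ∈ D.E
        · simp only [hβ, if_pos hj, if_pos ho]; omega
        · simp only [hβ, if_pos hj, if_neg ho]; exact D.w_pos j
    · simp only [hβ, if_neg hj]
      constructor
      · intro h; omega
      · intro h; exact absurd h hj
  have hβw : ∀ j, j ∈ C → β j ≤ D.w j := by
    intro j hj
    by_cases ho : ∃ k, k ∉ C ∧ (j, k) ∈ D.E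
    · simp only [hβ, if_pos hj, if_pos ho]; exact D.w_pos j
    · simp only [hβ, if_pos hj, if_neg ho]
      exact le_rfl
  have hsuppβ : {j | 1 ≤ β j} = C := Set.ext fun j => hβC j
  -- I ≤ Q'
  have hIQ : I ≤ irredIdeal K β := by
    rw [hI, WOGraph.edgeIdeal]
    apply Ideal.span_le.2
    rintro f ⟨e, he, rfl⟩
    rw [SetLike.mem_coe, edge_gen_eq, monomial_one_mem_irredIdeal_iff]
    have he' : (e.1, e.2) ∈ D.E := by rwa [Prod.mk.eta]
    by_cases h2 : e.2 ∈ C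
    · refine ⟨e.2, (hβC e.2).2 h2, ?_⟩
      have h3 : β e.2 ≤ D.w e.2 := hβw e.2 h2
      have hv : ((Finsupp.single e.1 1 + Finsupp.single e.2 (D.w e.2) : Fin s →₀ ℕ)) e.2 =
          Finsupp.single e.1 1 e.2 + D.w e.2 := by
        rw [Finsupp.add_apply, Finsupp.single_eq_same]
      omega
    · have h3 : e.1 ∈ C := (hcov e he).resolve_right h2
      have ho : ∃ k, k ∉ C ∧ (e.1, k) ∈ D.E := ⟨e.2, h2, he'⟩
      refine ⟨e.1, (hβC e.1).2 h3, ?_⟩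
      have h4 : β e.1 = 1 := by simp only [hβ, if_pos h3, if_pos ho]
      have hv : ((Finsupp.single e.1 1 + Finsupp.single e.2 (D.w e.2) : Fin s →₀ ℕ)) e.1 =
          1 + Finsupp.single e.2 (D.w e.2) e.1 := by
        rw [Finsupp.add_apply, Finsupp.single_eq_same]
      omega
  -- localization
  set φ := algebraMap (MvPolynomial (Fin s) K) (Localization.AtPrime p) with hφ
  have hmapQI : (irredIdeal K β).map φ ≤ I.map φ := by
    rw [irredIdeal, Ideal.map_span]
    apply Ideal.span_le.2
    rintro f ⟨g, ⟨j, hj1, rfl⟩, rfl⟩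
    have hjC : j ∈ C := (hβC j).1 hj1
    by_cases ho : ∃ k, k ∉ C ∧ (j, k) ∈ D.E
    · obtain ⟨k, hkC, hke⟩ := ho
      have hg : φ (X j * X k ^ D.w k) ∈ I.map φ :=
        Ideal.mem_map_of_mem _ (hgen (j, k) hke)
      have hXk : (X k : MvPolynomial (Fin s) K) ∉ p := by
        rw [hpC]; intro hXm; exact hkC (X_mem_PC_iff.1 hXm)
      have hunit : IsUnit (φ (X k)) :=
        IsLocalization.map_units (Localization.AtPrime p) (⟨X k, hXk⟩ : p.primeCompl)
      have ho' : ∃ k, k ∉ C ∧ (j, k) ∈ D.E := ⟨k, hkC, hke⟩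
      have hβj : β j = 1 := by simp only [hβ, if_pos hjC, if_pos ho']
      rw [map_mul, map_pow] at hg
      rw [SetLike.mem_coe, hβj, pow_one]
      exact mem_of_mul_unit_mem (hunit.pow _) hg
    · obtain ⟨k, hkC, hke⟩ := hminC j hjC
      have hke' : (k, j) ∈ D.E := by
        rcases hke with h | h
        · exact absurd ⟨k, hkC, h⟩ ho
        · exact h
      have hg : φ (X k * X j ^ D.w j) ∈ I.map φ :=
        Ideal.mem_map_of_mem _ (hgen (k, j) hke')
      have hXk : (X k : MvPolynomial (Fin s) K) ∉ p := by
        rw [hpC]; intro hXm; exact hkC (X_mem_PC_iff.1 hXm)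
      have hunit : IsUnit (φ (X k)) :=
        IsLocalization.map_units (Localization.AtPrime p) (⟨X k, hXk⟩ : p.primeCompl)
      have hβj : β j = D.w j := by simp only [hβ, if_pos hjC, if_neg ho]
      rw [map_mul, mul_comm] at hg
      rw [SetLike.mem_coe, hβj]
      exact mem_of_mul_unit_mem hunit hg
  have hmapeq : I.map φ = (irredIdeal K β).map φ :=
    le_antisymm (Ideal.map_mono hIQ) hmapQI
  -- the contraction of each power
  have hcontract : ∀ n : ℕ, contractAt (I ^ n) p hp.1.1 = (irredIdeal K β) ^ n := by
    intro n
    rw [contractAt_eq]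
    have hpow : (I ^ n).map φ = ((irredIdeal K β) ^ n).map φ := by
      rw [Ideal.map_pow, Ideal.map_pow, hmapeq]
    rw [← hφ, hpow]
    apply le_antisymm
    · intro x hx
      obtain ⟨u, hu, hux⟩ := mem_contract_iff.1 hx
      obtain ⟨G, hGsupp, hGeq⟩ := exists_MI_pow (K := K) β n
      rw [hGeq] at hux ⊢
      refine colon_MI C (fun g hg j hj => hGsupp g hg j ?_) ?_ hux
      · intro h1j; exact hj ((hβC j).1 h1j)
      · rw [hpC] at hu; exact hu
    · exact Ideal.le_comap_map
  have hQeq : (I.map φ).comap φ = irredIdeal K β := by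
    have h2 := hcontract 1
    rw [pow_one, pow_one, contractAt_eq] at h2
    rw [← hφ] at h2
    exact h2
  -- the set of components with radical p
  set T : Finset (Fin m) :=
    Finset.univ.filter (fun j => (irredIdeal K (α j)).radical = p) with hT
  have hi₀T : i₀ ∈ T := by
    refine Finset.mem_filter.2 ⟨Finset.mem_univ _, ?_⟩
    rw [hradC]; exact hpC.symm
  have hsuppj : ∀ j ∈ T, {i | 1 ≤ α j i} = C := by
    intro j hj
    apply PC_inj (K := K)
    rw [← radical_irredIdeal, (Finset.mem_filter.1 hj).2, hpC]
  have hcomapq : ∀ j ∈ T, ((irredIdeal K (α j)).map φ).comap φ = irredIdeal K (α j) := by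
    intro j hj
    apply le_antisymm _ Ideal.le_comap_map
    intro x hx
    have hx' : ∃ u, u ∉ p ∧ u * x ∈ irredIdeal K (α j) := mem_contract_iff.1 hx
    obtain ⟨u, hu, hux⟩ := hx'
    rw [irredIdeal_eq_MI] at hux ⊢
    refine colon_MI C ?_ (by rw [hpC] at hu; exact hu) hux
    rintro g ⟨i, hi1, rfl⟩ k hk
    rcases eq_or_ne i k with rfl | hne
    · exact absurd (by rw [← hsuppj j hj]; exact hi1) hk
    · exact Finsupp.single_eq_of_ne' hne
  have hQle : ∀ j ∈ T, irredIdeal K β ≤ irredIdeal K (α j) := by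
    intro j hj
    rw [← hQeq, ← hcomapq j hj]
    exact Ideal.comap_mono (Ideal.map_mono (hIq j))
  -- Q' equals the intersection of the components with radical p
  have hQT : irredIdeal K β = ⨅ j ∈ T, irredIdeal K (α j) := by
    apply le_antisymm (le_iInf₂ hQle)
    intro x hx
    have hx' : ∀ j ∈ T, x ∈ irredIdeal K (α j) := by
      intro j hj
      exact (Submodule.mem_iInf _).1 ((Submodule.mem_iInf _).1 hx j) hj
    have hchoice : ∀ j, j ∉ T → ∃ y, y ∈ irredIdeal K (α j) ∧ y ∉ p := by
      intro j hj
      have hradj : (irredIdeal K (α j)).radical ≠ p := by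
        intro hr; exact hj (Finset.mem_filter.2 ⟨Finset.mem_univ _, hr⟩)
      by_contra hcon
      push_neg at hcon
      have hle : irredIdeal K (α j) ≤ p := fun y hy => hcon y hy
      have h2 : (irredIdeal K (α j)).radical ≤ p := by
        have h3 := Ideal.radical_mono hle
        rwa [hpP.radical] at h3
      have h3 : I ≤ (irredIdeal K (α j)).radical := (hIq j).trans Ideal.le_radical
      have h4 : ((irredIdeal K (α j)).radical).IsPrime := by
        rw [radical_irredIdeal]; exact PC_isPrime _
      exact hradj (le_antisymm h2 (hp.2 ⟨h4, h3⟩ h2))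
    choose v hv1 hv2 using hchoice
    set vv : Fin m → MvPolynomial (Fin s) K :=
      fun j => if h : j ∉ T then v j h else 1 with hvv
    have hvvp : ∀ j, vv j ∉ p := by
      intro j
      by_cases hj : j ∉ T
      · simp only [hvv, dif_pos hj]; exact hv2 j hj
      · simp only [hvv, dif_neg hj]
        intro h1
        exact hpP.ne_top (Ideal.eq_top_iff_one p |>.2 h1)
    have hvvq : ∀ j, j ∉ T → vv j ∈ irredIdeal K (α j) := by
      intro j hj
      simp only [hvv, dif_pos hj]; exact hv1 j hj
    set u := ∏ j ∈ Finset.univ \ T, vv j with hu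
    have hunotp : u ∉ p := by
      have h2 : u ∈ p.primeCompl := Submonoid.prod_mem _ (fun j _ => hvvp j)
      exact h2
    have hux : u * x ∈ I := by
      rw [hdec, Submodule.mem_iInf]
      intro j
      by_cases hj : j ∈ T
      · exact Ideal.mul_mem_left _ _ (hx' j hj)
      · have hdvd : vv j ∣ u :=
          Finset.dvd_prod_of_mem vv (Finset.mem_sdiff.2 ⟨Finset.mem_univ _, hj⟩)
        obtain ⟨c, hc⟩ := hdvd
        have hc' : u = vv j * c := by rw [hu]; exact hc
        rw [hc', mul_assoc]
        exact Ideal.mul_mem_right _ _ (hvvq j hj)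
    rw [← hQeq]
    exact mem_contract_iff.2 ⟨u, hunotp, hux⟩
  -- uniqueness
  have hTeq : ∀ b ∈ T, b = i₀ := by
    intro b hb
    by_contra hne
    rcases irredIdeal_eq_inf_cases β T α hQT hi₀T with hcase | hcase
    · apply hirr b
      apply le_antisymm (le_iInf₂ fun i _ => hIq i)
      intro x hx
      have hx' : ∀ i, i ≠ b → x ∈ irredIdeal K (α i) := by
        intro i hi
        exact (Submodule.mem_iInf _).1 ((Submodule.mem_iInf _).1 hx i)
          (Set.mem_compl_singleton_iff.2 hi)
      have hxQ : x ∈ irredIdeal K β := by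
        rw [hcase]
        exact hx' i₀ (fun h => hne h.symm)
      have hxb : x ∈ irredIdeal K (α b) := hQle b hb hxQ
      rw [hdec, Submodule.mem_iInf]
      intro i
      rcases eq_or_ne i b with rfl | hib
      · exact hxb
      · exact hx' i hib
    · apply hirr i₀
      apply le_antisymm (le_iInf₂ fun i _ => hIq i)
      intro x hx
      have hx' : ∀ i, i ≠ i₀ → x ∈ irredIdeal K (α i) := by
        intro i hi
        exact (Submodule.mem_iInf _).1 ((Submodule.mem_iInf _).1 hx i)
          (Set.mem_compl_singleton_iff.2 hi)
      have hxQ : x ∈ irredIdeal K β := by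
        rw [hcase, Submodule.mem_iInf]
        intro j
        rw [Submodule.mem_iInf]
        intro hj
        exact hx' j (Finset.ne_of_mem_erase hj)
      have hxi₀ : x ∈ irredIdeal K (α i₀) := hQle i₀ hi₀T hxQ
      rw [hdec, Submodule.mem_iInf]
      intro i
      rcases eq_or_ne i i₀ with rfl | hii
      · exact hxi₀
      · exact hx' i hii
  have hText : T = {i₀} := Finset.eq_singleton_iff_unique_mem.2 ⟨hi₀T, hTeq⟩
  have hQi₀ : irredIdeal K β = irredIdeal K (α i₀) := by
    rw [hQT, hText]
    apply le_antisymm (iInf₂_le _ (Finset.mem_singleton_self i₀))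
    exact le_iInf₂ fun j hj => by rw [Finset.mem_singleton.1 hj]
  refine ⟨i₀, ?_, ?_⟩
  · intro i'
    constructor
    · intro h
      exact hTeq i' (Finset.mem_filter.2 ⟨Finset.mem_univ _, h⟩)
    · rintro rfl
      rw [hradC]; exact hpC.symm
  · intro n
    rw [hcontract n, hQi₀]



end WOGAux

/-- **Lemma.** Let `D` be a weighted oriented graph with edge ideal `I(D)` and
(irredundant) irreducible decomposition `I(D) = q_{α_1} ∩ ⋯ ∩ q_{α_m}`. For each minimal
prime `p` of `I(D)` there is exactly one irreducible component `q` with `rad(q) = p`,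
and `I(D)^{(n)}` is the intersection of the `n`-th powers of these components, for all
`n ≥ 1`. -/
theorem exists_unique_component_and_symbolicPower_eq {s m : ℕ} (K : Type*) [Field K]
    (D : WOGraph s) (α : Fin m → (Fin s → ℕ)) (hα : ∀ i, α i ≠ 0)
    (hdec : D.edgeIdeal K = ⨅ i, irredIdeal K (α i))
    (hirr : ∀ j : Fin m,
      D.edgeIdeal K ≠ ⨅ i ∈ ({j}ᶜ : Set (Fin m)), irredIdeal K (α i)) :
    ∃ f : (D.edgeIdeal K).minimalPrimes → Fin m,
      (∀ p : (D.edgeIdeal K).minimalPrimes,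
        (irredIdeal K (α (f p))).radical = (p : Ideal (MvPolynomial (Fin s) K))) ∧
      (∀ p : (D.edgeIdeal K).minimalPrimes, ∀ i : Fin m,
        (irredIdeal K (α i)).radical = (p : Ideal (MvPolynomial (Fin s) K)) → i = f p) ∧
      (∀ n : ℕ, 1 ≤ n → symbolicPower (D.edgeIdeal K) n =
        ⨅ p : (D.edgeIdeal K).minimalPrimes, irredIdeal K (α (f p)) ^ n) := by
    classical
  have main := fun (P : (D.edgeIdeal K).minimalPrimes) =>
    WOGAux.main_aux K D α hdec hirr P.1 P.2
  choose f hf1 hf2 using main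
  refine ⟨f, ?_, ?_, ?_⟩
  · intro P
    exact ((hf1 P) (f P)).2 rfl
  · intro P i h
    exact (hf1 P i).1 h
  · intro n _
    have hstep : ∀ (p : Ideal (MvPolynomial (Fin s) K))
        (hp : p ∈ (D.edgeIdeal K).minimalPrimes),
        contractAt ((D.edgeIdeal K) ^ n) p hp.1.1 =
          irredIdeal K (α (f ⟨p, hp⟩)) ^ n := fun p hp => hf2 ⟨p, hp⟩ n
    rw [symbolicPower]
    rw [iInf_subtype']
    exact iInf_congr fun P => hstep P.1 P.2
end

section
/- Let I be a monomial ideal of S = K[t_1,…,t_s] with a minimal irreducible decomposition I = q_{α_1} ∩ ⋯ ∩ q_{α_m}. If I^n = I^{(n)} for all n ≥ 1, then for all n ≥ 1 the integral closure of I^n equals the intersection of the integral closures of the q_{α_i}^n, i.e., \overline{I^n} = \overline{q_{α_1}^n} ∩ ⋯ ∩ \overline{q_{α_m}^n}. -/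
open MvPolynomial Pointwise

/-- The integral closure of a monomial ideal `J`:
the ideal `({t^a : (t^a)^p ∈ J^p for some integer p ≥ 1})`. -/
noncomputable def monIntegralClosure {s : ℕ} (K : Type*) [Field K]
    (J : Ideal (MvPolynomial (Fin s) K)) : Ideal (MvPolynomial (Fin s) K) :=
  Ideal.span { f | ∃ a : Fin s →₀ ℕ, f = monomial a (1 : K) ∧
    ∃ p : ℕ, 1 ≤ p ∧ (monomial a (1 : K)) ^ p ∈ J ^ p }

-- auxiliary: span of a set of variables is prime
set_option synthInstance.maxHeartbeats 1000000 in
lemma span_X_isPrime {s : ℕ} (K : Type*) [Field K] (T : Set (Fin s)) :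
    (Ideal.span (X '' T : Set (MvPolynomial (Fin s) K))).IsPrime := by
  classical
  set φ : MvPolynomial (Fin s) K →ₐ[K] MvPolynomial {i : Fin s // i ∉ T} K :=
    aeval (fun i => if h : i ∈ T then 0 else X ⟨i, h⟩)
  have hker : Ideal.span (X '' T : Set (MvPolynomial (Fin s) K)) = RingHom.ker φ.toRingHom := by
    apply le_antisymm
    · rw [Ideal.span_le]
      rintro f ⟨i, hi, rfl⟩
      simp only [SetLike.mem_coe, RingHom.mem_ker, AlgHom.toRingHom_eq_coe, RingHom.coe_coe, φ,
        aeval_X, dif_pos hi]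
    · set ψ : MvPolynomial {i : Fin s // i ∉ T} K →ₐ[K] MvPolynomial (Fin s) K :=
        rename Subtype.val
      set π := Ideal.Quotient.mkₐ K (Ideal.span (X '' T : Set (MvPolynomial (Fin s) K)))
      have key : π.comp (ψ.comp φ) = π := by
        apply MvPolynomial.algHom_ext
        intro i
        by_cases hi : i ∈ T
        · have hmem : X i ∈ Ideal.span (X '' T : Set (MvPolynomial (Fin s) K)) :=
            Ideal.subset_span ⟨i, hi, rfl⟩
          simp only [AlgHom.comp_apply, φ, aeval_X, dif_pos hi, map_zero, π,
            Ideal.Quotient.mkₐ_eq_mk]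
          exact (Ideal.Quotient.eq_zero_iff_mem.2 hmem).symm
        · simp [AlgHom.comp_apply, φ, ψ, dif_neg hi]
      intro f hf
      have hf0 : φ f = 0 := hf
      have := congrArg (fun g : MvPolynomial (Fin s) K →ₐ[K]
        (MvPolynomial (Fin s) K ⧸ Ideal.span (X '' T : Set (MvPolynomial (Fin s) K)))
        => g f) key
      simp only [AlgHom.comp_apply, hf0, map_zero] at this
      have hπ : Ideal.Quotient.mk (Ideal.span (X '' T : Set (MvPolynomial (Fin s) K))) f = 0 := by
        simpa [π, Ideal.Quotient.mkₐ_eq_mk] using this.symm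
      exact Ideal.Quotient.eq_zero_iff_mem.1 hπ
  rw [hker]
  exact RingHom.ker_isPrime _

lemma radical_irredIdeal {s : ℕ} (K : Type*) [Field K] (b : Fin s → ℕ) :
    (irredIdeal K b).radical = Ideal.span (X '' {i | 1 ≤ b i} : Set (MvPolynomial (Fin s) K)) := by
  apply le_antisymm
  · have h1 : irredIdeal K b ≤ Ideal.span (X '' {i | 1 ≤ b i}) := by
      rw [irredIdeal, Ideal.span_le]
      rintro f ⟨i, hbi, rfl⟩
      refine Ideal.pow_mem_of_mem _ ?_ _ hbi
      exact Ideal.subset_span ⟨i, hbi, rfl⟩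
    calc (irredIdeal K b).radical ≤ (Ideal.span (X '' {i | 1 ≤ b i} :
          Set (MvPolynomial (Fin s) K))).radical := Ideal.radical_mono h1
      _ = _ := (span_X_isPrime K _).radical
  · rw [Ideal.span_le]
    rintro f ⟨i, hbi, rfl⟩
    exact Ideal.mem_radical_iff.2 ⟨b i, Ideal.subset_span ⟨i, hbi, rfl⟩⟩

lemma radical_irredIdeal_isPrime {s : ℕ} (K : Type*) [Field K] (b : Fin s → ℕ) :
    (irredIdeal K b).radical.IsPrime := by
  rw [radical_irredIdeal]; exact span_X_isPrime K _

lemma monIntegralClosure_eq_span_image {s : ℕ} (K : Type*) [Field K]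
    (J : Ideal (MvPolynomial (Fin s) K)) :
    monIntegralClosure K J = Ideal.span ((fun a => monomial a (1 : K)) ''
      {a : Fin s →₀ ℕ | ∃ p : ℕ, 1 ≤ p ∧ (monomial a (1 : K)) ^ p ∈ J ^ p}) := by
  unfold monIntegralClosure
  congr 1
  ext f
  constructor
  · rintro ⟨a, rfl, h⟩; exact ⟨a, h, rfl⟩
  · rintro ⟨a, h, rfl⟩; exact ⟨a, rfl, h⟩

lemma monIntegralClosure_mono {s : ℕ} (K : Type*) [Field K]
    {J J' : Ideal (MvPolynomial (Fin s) K)} (h : J ≤ J') :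
    monIntegralClosure K J ≤ monIntegralClosure K J' := by
  apply Ideal.span_mono
  rintro f ⟨a, rfl, p, hp, hmem⟩
  exact ⟨a, rfl, p, hp, Ideal.pow_right_mono h p hmem⟩

lemma inf_pow_le_pow {s m : ℕ} (K : Type*) [Field K]
    (I : Ideal (MvPolynomial (Fin s) K)) (α : Fin m → (Fin s → ℕ))
    (hdec : I = ⨅ i, irredIdeal K (α i))
    (hminrad : ∀ i j : Fin m, i ≠ j →
      (irredIdeal K (α i)).radical ≠ (irredIdeal K (α j)).radical)
    (hsym : ∀ n : ℕ, 1 ≤ n → I ^ n = symbolicPower I n) :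
    ∀ N : ℕ, 1 ≤ N → (⨅ i, irredIdeal K (α i) ^ N) ≤ I ^ N := by
  classical
  intro N hN
  rw [hsym N hN, symbolicPower]
  refine le_iInf fun p => le_iInf fun hp => ?_
  haveI hpp : p.IsPrime := hp.1.1
  have hq : ∀ i, I ≤ irredIdeal K (α i) := fun i => hdec ▸ iInf_le _ i
  have hprodI : (∏ i, irredIdeal K (α i)) ≤ I := by
    rw [hdec]
    refine le_iInf fun i => ?_
    exact le_trans Ideal.prod_le_inf (Finset.inf_le (Finset.mem_univ i))
  have hple : (∏ i, irredIdeal K (α i)) ≤ p := le_trans hprodI hp.1.2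
  obtain ⟨i₀, -, hi₀⟩ := (Ideal.IsPrime.prod_le hpp).1 hple
  have hpeq : ∀ j, (irredIdeal K (α j)).radical ≤ p → p = (irredIdeal K (α j)).radical := by
    intro j hj
    have hIr : I ≤ (irredIdeal K (α j)).radical := le_trans (hq j) Ideal.le_radical
    exact le_antisymm (hp.2 ⟨radical_irredIdeal_isPrime K (α j), hIr⟩ hj) hj
  have hi₀rad : (irredIdeal K (α i₀)).radical ≤ p := by
    have h := Ideal.radical_mono hi₀
    rwa [hpp.radical] at h
  set F := algebraMap (MvPolynomial (Fin s) K) (Localization.AtPrime p)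
  have htop : ∀ j, j ≠ i₀ → Ideal.map F (irredIdeal K (α j)) = ⊤ := by
    intro j hj
    have hnotle : ¬ irredIdeal K (α j) ≤ p := by
      intro hle
      have hr : (irredIdeal K (α j)).radical ≤ p := by
        have h := Ideal.radical_mono hle
        rwa [hpp.radical] at h
      exact hminrad j i₀ hj ((hpeq j hr).symm.trans (hpeq i₀ hi₀rad))
    obtain ⟨y, hy, hyp⟩ := SetLike.not_le_iff_exists.1 hnotle
    exact Ideal.eq_top_of_isUnit_mem _ (Ideal.mem_map_of_mem F hy)
      (IsLocalization.map_units (M := p.primeCompl) (Localization.AtPrime p) ⟨y, hyp⟩)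
  have hmaple : Ideal.map F (irredIdeal K (α i₀)) ≤ Ideal.map F I := by
    have h1 : Ideal.map F (∏ j, irredIdeal K (α j)) = ∏ j, Ideal.map F (irredIdeal K (α j)) :=
      map_prod (Ideal.mapHom F) _ _
    have h2 : ∏ j, Ideal.map F (irredIdeal K (α j)) = Ideal.map F (irredIdeal K (α i₀)) := by
      rw [← Finset.mul_prod_erase Finset.univ _ (Finset.mem_univ i₀)]
      have h3 : ∏ j ∈ Finset.univ.erase i₀, Ideal.map F (irredIdeal K (α j)) = 1 := by
        refine Finset.prod_eq_one fun j hj => ?_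
        rw [Ideal.one_eq_top]
        exact htop j (Finset.ne_of_mem_erase hj)
      rw [h3, mul_one]
    calc Ideal.map F (irredIdeal K (α i₀)) = Ideal.map F (∏ j, irredIdeal K (α j)) := by
          rw [h1, h2]
      _ ≤ Ideal.map F I := Ideal.map_mono hprodI
  intro x hx
  have hx0 : x ∈ irredIdeal K (α i₀) ^ N := (iInf_le (fun i => irredIdeal K (α i) ^ N) i₀) hx
  show x ∈ contractAt (I ^ N) p hp.1.1
  show F x ∈ Ideal.map F (I ^ N)
  have hm : F x ∈ Ideal.map F (irredIdeal K (α i₀) ^ N) := Ideal.mem_map_of_mem F hx0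
  rw [Ideal.map_pow] at hm
  rw [Ideal.map_pow]
  exact Ideal.pow_right_mono hmaple N hm

/-- **Theorem (integral closures).** Let `I` be a monomial ideal of `S = K[t_1,…,t_s]`
with a minimal irreducible decomposition `I = q_{α_1} ∩ ⋯ ∩ q_{α_m}` (irredundant, with
pairwise distinct radicals). If `Iⁿ = I^{(n)}` for all `n ≥ 1`, then
`closure(Iⁿ) = closure(q_{α_1}ⁿ) ∩ ⋯ ∩ closure(q_{α_m}ⁿ)` for all `n ≥ 1`. -/
theorem integralClosure_pow_eq_iInf {s m : ℕ} (K : Type*) [Field K]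
    (I : Ideal (MvPolynomial (Fin s) K))
    (α : Fin m → (Fin s → ℕ)) (hα : ∀ i, α i ≠ 0)
    (hdec : I = ⨅ i, irredIdeal K (α i))
    (hirr : ∀ j : Fin m, I ≠ ⨅ i ∈ ({j}ᶜ : Set (Fin m)), irredIdeal K (α i))
    (hminrad : ∀ i j : Fin m, i ≠ j →
      (irredIdeal K (α i)).radical ≠ (irredIdeal K (α j)).radical)
    (hsym : ∀ n : ℕ, 1 ≤ n → I ^ n = symbolicPower I n) :
    ∀ n : ℕ, 1 ≤ n →
      monIntegralClosure K (I ^ n) = ⨅ i, monIntegralClosure K (irredIdeal K (α i) ^ n) := by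
  classical
  intro n hn
  have hq : ∀ i, I ≤ irredIdeal K (α i) := fun i => hdec ▸ iInf_le _ i
  have key := inf_pow_le_pow K I α hdec hminrad hsym
  apply le_antisymm
  · exact le_iInf fun i => monIntegralClosure_mono K (Ideal.pow_right_mono (hq i) n)
  · intro f hf
    rw [monIntegralClosure_eq_span_image, mem_ideal_span_monomial_image]
    intro xi hxi
    refine ⟨xi, ?_, le_rfl⟩
    have hfi : ∀ i, ∃ a : Fin s →₀ ℕ,
        (∃ p : ℕ, 1 ≤ p ∧ (monomial a (1 : K)) ^ p ∈ (irredIdeal K (α i) ^ n) ^ p) ∧ a ≤ xi := by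
      intro i
      have hfmem : f ∈ monIntegralClosure K (irredIdeal K (α i) ^ n) :=
        (iInf_le (fun i => monIntegralClosure K (irredIdeal K (α i) ^ n)) i) hf
      rw [monIntegralClosure_eq_span_image, mem_ideal_span_monomial_image] at hfmem
      exact hfmem xi hxi
    choose a ha hle using hfi
    choose pp hp1 hp2 using ha
    have hP : 1 ≤ ∏ i, pp i := Finset.one_le_prod' fun i _ => hp1 i
    have hmem : ∀ i, (monomial xi (1 : K)) ^ (∏ j, pp j) ∈
        irredIdeal K (α i) ^ (n * ∏ j, pp j) := by
      intro i
      have hmon : (monomial xi (1 : K)) = monomial (a i) 1 * monomial (xi - a i) 1 := by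
        rw [monomial_mul, one_mul, add_tsub_cancel_of_le (hle i)]
      have h1 : (monomial xi (1 : K)) ^ (pp i) ∈ irredIdeal K (α i) ^ (n * pp i) := by
        rw [hmon, mul_pow, pow_mul]
        exact Ideal.mul_mem_right _ _ (hp2 i)
      have h2 := Ideal.pow_mem_pow h1 (∏ j ∈ Finset.univ.erase i, pp j)
      rw [← pow_mul, ← pow_mul, mul_assoc,
        Finset.mul_prod_erase Finset.univ pp (Finset.mem_univ i)] at h2
      exact h2
    have hfin : (monomial xi (1 : K)) ^ (∏ j, pp j) ∈ I ^ (n * ∏ j, pp j) := by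
      apply key (n * ∏ j, pp j) (by simpa using Nat.mul_le_mul hn hP)
      exact (Submodule.mem_iInf _).2 hmem
    exact ⟨∏ j, pp j, hP, by rwa [pow_mul] at hfin⟩
end
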